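/- arXiv:1004.1661 — 5 statements merged into one kernel-verified Lean document; each statement's English description precedes it below -/
import Mathlib

section
/- For any natural numbers d ≥ 1 and n > 1 there exists a natural number t ≥ 1 such that for every finite simplicial complex 𝒯 in ℝ^d all of whose vertices lie in the integer lattice ℤ^d, the number of lattice points of ℤ^d contained in the dilated set t·|𝒯| (the image of the underlying polyhedron of 𝒯 under the homothety with center the origin and ratio t) is congruent to the Euler characteristic χ(𝒯) modulo n. -/
namespace AT

variable {d : ℕ}

def iota (x : Fin d → ℤ) : Fin d → ℝ := fun j => (x j : ℝ)

lemma iota_inj : Function.Injective (iota (d := d)) := by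
  intro x y h
  funext j
  have := congrFun h j
  simp only [iota] at this
  exact_mod_cast this

lemma iota_add (x y : Fin d → ℤ) : iota (x + y) = iota x + iota y := by
  funext j; simp [iota]

lemma iota_sub (x y : Fin d → ℤ) : iota (x - y) = iota x - iota y := by
  funext j; simp [iota]

lemma iota_sum {α : Type*} (F : Finset α) (f : α → Fin d → ℤ) :
    iota (∑ i ∈ F, f i) = ∑ i ∈ F, iota (f i) := by
  funext j; simp [iota]

lemma iota_nsmul (a : ℕ) (x : Fin d → ℤ) : iota (a • x) = (a : ℝ) • iota x := by
  funext j; simp [iota]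

lemma finite_lattice (R : ℝ) :
    {x : Fin d → ℤ | ∀ j, |(x j : ℝ)| ≤ R}.Finite := by
  have : {x : Fin d → ℤ | ∀ j, |(x j : ℝ)| ≤ R} ⊆
      Set.pi Set.univ (fun _ : Fin d => Set.Icc (-⌈R⌉) ⌈R⌉) := by
    intro x hx j _
    have h := hx j
    have h1 : (x j : ℝ) ≤ ⌈R⌉ := le_trans (le_trans (le_abs_self _) h) (Int.le_ceil R)
    have h2 : ((-⌈R⌉ : ℤ) : ℝ) ≤ (x j : ℝ) := by
      push_cast
      have := (abs_le.mp h).1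
      linarith [Int.le_ceil R]
    exact ⟨by exact_mod_cast h2, by exact_mod_cast h1⟩
  exact Set.Finite.subset (Set.Finite.pi (fun _ => Set.finite_Icc _ _)) this

lemma ncard_biUnion {α β : Type*} (F : Finset α) (A : α → Set β)
    (hfin : ∀ s ∈ F, (A s).Finite)
    (hdisj : ∀ s ∈ F, ∀ t ∈ F, s ≠ t → Disjoint (A s) (A t)) :
    (⋃ s ∈ F, A s).ncard = ∑ s ∈ F, (A s).ncard := by
  classical
  induction F using Finset.induction with
  | empty => simp
  | @insert a F' hx ih =>
    rw [Finset.set_biUnion_insert, Finset.sum_insert hx]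
    rw [Set.ncard_union_eq ?_ (hfin a (Finset.mem_insert_self _ _)) ?_, ih]
    · exact fun s hs => hfin s (Finset.mem_insert_of_mem hs)
    · intro s hs t ht hst
      exact hdisj s (Finset.mem_insert_of_mem hs) t (Finset.mem_insert_of_mem ht) hst
    · refine Set.disjoint_iUnion₂_right.mpr fun s hs => ?_
      exact hdisj a (Finset.mem_insert_self _ _) s (Finset.mem_insert_of_mem hs)
        (by rintro rfl; exact hx hs)
    · exact Set.Finite.biUnion (F'.finite_toSet) (fun s hs => hfin s (Finset.mem_insert_of_mem hs))

lemma dvd_choose {n t i : ℕ} (hi : 1 ≤ i) (hdvd : n * i ∣ t) : n ∣ t.choose i := by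
  rcases Nat.exists_eq_add_of_le hi with ⟨j, rfl⟩
  have key : t * Nat.choose (t - 1) j = Nat.choose t (j + 1) * (j + 1) := by
    rcases Nat.eq_zero_or_pos t with rfl | ht
    · simp
    · rcases Nat.exists_eq_add_of_le ht with ⟨t', rfl⟩
      simpa [Nat.add_sub_cancel_left, add_comm] using Nat.add_one_mul_choose_eq t' j
  have h1 : n * (1 + j) ∣ Nat.choose t (j + 1) * (j + 1) := by
    rw [← key]
    exact Dvd.dvd.mul_right hdvd _
  rw [add_comm 1 j] at h1
  have := (mul_dvd_mul_iff_right (a := n) (b := Nat.choose t (j+1)) (c := j+1) (by positivity)).mp h1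
  simpa [add_comm] using this

lemma dvd_choose_add {n t j k : ℕ} (hjk : j < k)
    (h : ∀ i, 1 ≤ i → i ≤ k → n * i ∣ t) : n ∣ (t + j).choose k := by
  rw [Nat.add_choose_eq]
  refine Finset.dvd_sum ?_
  rintro ⟨a, b⟩ hab
  rw [Finset.HasAntidiagonal.mem_antidiagonal] at hab
  rcases Nat.eq_zero_or_pos a with rfl | ha
  · simp only [zero_add] at hab; subst hab
    simp [Nat.choose_eq_zero_of_lt hjk]
  · exact Dvd.dvd.mul_right (dvd_choose ha (h a ha (by omega))) _

lemma choose_sub_one {n t k : ℕ} (ht : 1 ≤ t)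
    (h : ∀ i, 1 ≤ i → i ≤ k → n * i ∣ t) :
    ((t - 1).choose k : ℤ) ≡ (-1) ^ k [ZMOD (n : ℤ)] := by
  induction k with
  | zero => simp [Int.ModEq.refl]
  | succ k ih =>
    have ihk := ih (fun i h1 h2 => h i h1 (by omega))
    have pascal : (t - 1).choose k + (t - 1).choose (k + 1) = t.choose (k+1) := by
      rcases Nat.exists_eq_add_of_le ht with ⟨t', rfl⟩
      simpa [Nat.add_sub_cancel_left, add_comm] using (Nat.choose_succ_succ t' k).symm
    have h0 : (n : ℤ) ∣ (t.choose (k+1) : ℤ) := by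
      exact_mod_cast Int.natCast_dvd_natCast.mpr (dvd_choose (by omega) (h (k+1) (by omega) le_rfl))
    have heq : ((t-1).choose (k+1) : ℤ) = (t.choose (k+1) : ℤ) - ((t-1).choose k : ℤ) := by
      push_cast [← pascal]; ring
    calc ((t-1).choose (k+1) : ℤ) = (t.choose (k+1) : ℤ) - ((t-1).choose k : ℤ) := heq
      _ ≡ 0 - (-1)^k [ZMOD (n:ℤ)] := Int.ModEq.sub ((Int.modEq_zero_iff_dvd).mpr h0) ihk
      _ = (-1)^(k+1) := by ring

lemma finite_sum_eq {α : Type*} [Fintype α] [DecidableEq α] (M : ℕ) :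
    {a : α → ℕ | ∑ i, a i = M}.Finite := by
  haveI : Fintype {a : α → ℕ // ∑ i, a i = M} :=
    Fintype.ofEquiv _ (Sym.equivNatSumOfFintype α M)
  have : {a : α → ℕ | ∑ i, a i = M} ⊆ Set.range (fun p : {a : α → ℕ // ∑ i, a i = M} => (p : α → ℕ)) := by
    intro a ha; exact ⟨⟨a, ha⟩, rfl⟩
  exact Set.Finite.subset (Set.finite_range _) this

lemma ncard_sum_eq {α : Type*} [Fintype α] [DecidableEq α] (M : ℕ) :
    {a : α → ℕ | ∑ i, a i = M}.ncard = (Fintype.card α + M - 1).choose M := by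
  haveI : Fintype {a : α → ℕ // ∑ i, a i = M} :=
    Fintype.ofEquiv _ (Sym.equivNatSumOfFintype α M)
  rw [← Nat.card_coe_set_eq]
  have : Nat.card ↥{a : α → ℕ | ∑ i, a i = M} = Nat.card {a : α → ℕ // ∑ i, a i = M} :=
    Nat.card_congr (Equiv.subtypeEquivRight (fun _ => Iff.rfl))
  rw [this, Nat.card_eq_fintype_card, ← Fintype.card_congr (Sym.equivNatSumOfFintype α M),
    Sym.card_sym_eq_choose]

lemma face_count {d n : ℕ} (hn : 1 ≤ n) (s : Finset (Fin d → ℝ))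
    (hind : AffineIndependent ℝ ((↑) : ↑s → (Fin d → ℝ)))
    (hlat : ∀ y ∈ s, ∃ z : Fin d → ℤ, y = iota z)
    (hne : s.Nonempty) (hcard : s.card ≤ d + 1) :
    ({x : Fin d → ℤ | ∃ w : ↑s → ℝ, (∀ i, 0 < w i) ∧
        ∑ i, w i = ((n * Nat.factorial (d+1) : ℕ) : ℝ) ∧
        ∑ i, w i • (i : Fin d → ℝ) = iota x}).Finite ∧
    (({x : Fin d → ℤ | ∃ w : ↑s → ℝ, (∀ i, 0 < w i) ∧
        ∑ i, w i = ((n * Nat.factorial (d+1) : ℕ) : ℝ) ∧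
        ∑ i, w i • (i : Fin d → ℝ) = iota x}).ncard : ℤ)
      ≡ (-1)^(s.card - 1) [ZMOD (n:ℤ)] := by
  classical
  set t : ℕ := n * Nat.factorial (d+1) with ht_def
  set T : Set (Fin d → ℤ) := {x | ∃ w : ↑s → ℝ, (∀ i, 0 < w i) ∧ ∑ i, w i = (t:ℝ) ∧
      ∑ i, w i • (i : Fin d → ℝ) = iota x} with hT_def
  haveI : Nonempty ↑s := ⟨⟨hne.choose, hne.choose_spec⟩⟩
  have hm : 1 ≤ s.card := hne.card_pos
  have hcardcoe : Fintype.card ↑s = s.card := Fintype.card_coe s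
  have htpos : 1 ≤ t := Nat.one_le_iff_ne_zero.mpr
    (Nat.mul_ne_zero (by omega) (Nat.factorial_pos _).ne')
  have hmt : s.card ≤ t := by
    calc s.card ≤ d + 1 := hcard
      _ ≤ Nat.factorial (d+1) := Nat.self_le_factorial _
      _ ≤ n * Nat.factorial (d+1) := Nat.le_mul_of_pos_left _ (by omega)
  have hdvd : ∀ i, 1 ≤ i → i ≤ d + 1 → n * i ∣ t :=
    fun i h1 h2 => Nat.mul_dvd_mul_left n (Nat.dvd_factorial (by omega) h2)
  -- choose integer coordinates for the vertices
  have hzex : ∀ i : ↑s, ∃ zz : Fin d → ℤ, (i : Fin d → ℝ) = iota zz := fun i => hlat i i.2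
  choose z hz using hzex
  -- uniqueness of weights
  have huniq : ∀ (w w' : ↑s → ℝ), ∑ i, w i = ∑ i, w' i →
      ∑ i, w i • (i : Fin d → ℝ) = ∑ i, w' i • (i : Fin d → ℝ) → w = w' := by
    intro w w' h1 h2
    funext i
    exact hind.eq_of_sum_eq_sum h1 h2 i (Finset.mem_univ i)
  -- the fundamental half-open parallelepiped points
  set P : Set ((Fin d → ℤ) × ℤ) := {y | ∃ c : ↑s → ℝ, (∀ i, 0 < c i ∧ c i ≤ 1) ∧
      ∑ i, c i = (y.2 : ℝ) ∧ ∑ i, c i • (i : Fin d → ℝ) = iota y.1} with hP_def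
  have hy2 : ∀ y ∈ P, 1 ≤ y.2 ∧ y.2 ≤ (s.card : ℤ) := by
    rintro y ⟨c, hc, hcsum, -⟩
    have hpos : (0:ℝ) < ∑ i, c i := Finset.sum_pos (fun i _ => (hc i).1) Finset.univ_nonempty
    have hle : ∑ i, c i ≤ (s.card : ℝ) := by
      calc ∑ i, c i ≤ ∑ _i : ↑s, (1:ℝ) := Finset.sum_le_sum (fun i _ => (hc i).2)
        _ = (s.card : ℝ) := by simp [hcardcoe]
    rw [hcsum] at hpos hle
    constructor
    · exact_mod_cast hpos
    · exact_mod_cast hle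
  have hPfin : P.Finite := by
    have hsub : P ⊆ {x : Fin d → ℤ | ∀ j, |(x j : ℝ)| ≤ ∑ i : ↑s, ‖(i : Fin d → ℝ)‖} ×ˢ
        Set.Icc (1:ℤ) (s.card : ℤ) := by
      rintro y hy
      obtain ⟨c, hc, hcsum, hcrep⟩ := hy
      refine ⟨fun j => ?_, (hy2 y ⟨c, hc, hcsum, hcrep⟩).1, (hy2 y ⟨c, hc, hcsum, hcrep⟩).2⟩
      have hj : (y.1 j : ℝ) = ∑ i : ↑s, c i * (i : Fin d → ℝ) j := by
        have := congrFun hcrep.symm j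
        simpa [iota, Finset.sum_apply] using this
      rw [hj]
      calc |∑ i : ↑s, c i * (i : Fin d → ℝ) j| ≤ ∑ i : ↑s, |c i * (i : Fin d → ℝ) j| :=
            Finset.abs_sum_le_sum_abs _ _
        _ ≤ ∑ i : ↑s, ‖(i : Fin d → ℝ)‖ := by
            refine Finset.sum_le_sum (fun i _ => ?_)
            rw [abs_mul]
            have h1 : |c i| ≤ 1 := abs_le.mpr ⟨by linarith [(hc i).1], (hc i).2⟩
            have h2 : |(i : Fin d → ℝ) j| ≤ ‖(i : Fin d → ℝ)‖ := by
              rw [← Real.norm_eq_abs]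
              exact norm_le_pi_norm _ j
            calc |c i| * |(i : Fin d → ℝ) j| ≤ 1 * ‖(i : Fin d → ℝ)‖ :=
                  mul_le_mul h1 h2 (abs_nonneg _) zero_le_one
              _ = ‖(i : Fin d → ℝ)‖ := one_mul _
    exact ((finite_lattice _).prod (Set.finite_Icc _ _)).subset hsub
  -- the "fibers"
  set G : (Fin d → ℤ) × ℤ → Set (Fin d → ℤ) := fun y =>
    (fun a : ↑s → ℕ => y.1 + ∑ i, a i • z i) '' {a | (∑ i, (a i : ℤ)) = (t:ℤ) - y.2}
    with hG_def
  -- master uniqueness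
  have hmaster : ∀ y ∈ P, ∀ y' ∈ P, ∀ a a' : ↑s → ℕ,
      (∑ i, (a i : ℤ)) = (t:ℤ) - y.2 → (∑ i, (a' i : ℤ)) = (t:ℤ) - y'.2 →
      y.1 + ∑ i, a i • z i = y'.1 + ∑ i, a' i • z i → y = y' ∧ a = a' := by
    rintro y ⟨c, hc, hcsum, hcrep⟩ y' ⟨c', hc', hcsum', hcrep'⟩ a a' ha ha' heq
    have hsuma : ∑ i, (a i : ℝ) = (t:ℝ) - (y.2 : ℝ) := by exact_mod_cast ha
    have hsuma' : ∑ i, (a' i : ℝ) = (t:ℝ) - (y'.2 : ℝ) := by exact_mod_cast ha'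
    have hrepa : ∑ i, ((c i + (a i : ℝ)) • (i : Fin d → ℝ)) = iota (y.1 + ∑ i, a i • z i) := by
      rw [iota_add, iota_sum]
      simp only [add_smul, Finset.sum_add_distrib, hcrep]
      congr 1
      refine Finset.sum_congr rfl (fun i _ => ?_)
      rw [iota_nsmul, hz i]
    have hrepa' : ∑ i, ((c' i + (a' i : ℝ)) • (i : Fin d → ℝ)) = iota (y'.1 + ∑ i, a' i • z i) := by
      rw [iota_add, iota_sum]
      simp only [add_smul, Finset.sum_add_distrib, hcrep']
      congr 1
      refine Finset.sum_congr rfl (fun i _ => ?_)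
      rw [iota_nsmul, hz i]
    have hw : (fun i => c i + (a i : ℝ)) = (fun i => c' i + (a' i : ℝ)) := by
      refine huniq _ _ ?_ ?_
      · simp only [Finset.sum_add_distrib, hcsum, hcsum', hsuma, hsuma']
        ring
      · rw [hrepa, hrepa', heq]
    have haa' : a = a' := by
      funext i
      have hwi : c i + (a i : ℝ) = c' i + (a' i : ℝ) := congrFun hw i
      have h1 : ((a i : ℤ) : ℝ) - ((a' i : ℤ) : ℝ) < 1 := by
        push_cast
        have := (hc i).1; have := (hc' i).2
        linarith
      have h2 : (-1 : ℝ) < ((a i : ℤ) : ℝ) - ((a' i : ℤ) : ℝ) := by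
        push_cast
        have := (hc i).2; have := (hc' i).1
        linarith
      have h1' : (a i : ℤ) - (a' i : ℤ) < 1 := by exact_mod_cast h1
      have h2' : (-1 : ℤ) < (a i : ℤ) - (a' i : ℤ) := by exact_mod_cast h2
      omega
    subst haa'
    have hcc' : c = c' := by
      funext i
      have hwi : c i + (a i : ℝ) = c' i + (a i : ℝ) := congrFun hw i
      linarith
    subst hcc'
    have hy2eq : y.2 = y'.2 := by
      have : (y.2 : ℝ) = (y'.2 : ℝ) := by rw [← hcsum, ← hcsum']
      exact_mod_cast this
    have hy1eq : y.1 = y'.1 := by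
      apply iota_inj
      rw [← hcrep, ← hcrep']
    exact ⟨Prod.ext hy1eq hy2eq, rfl⟩
  -- decomposition of T
  have hcover : T = ⋃ y ∈ P, G y := by
    ext x
    simp only [hT_def, Set.mem_setOf_eq, Set.mem_iUnion, exists_prop]
    constructor
    · rintro ⟨w, hw, hwsum, hwrep⟩
      set a : ↑s → ℕ := fun i => (⌈w i⌉ - 1).toNat with ha_def
      have hceil : ∀ i, 1 ≤ ⌈w i⌉ := fun i => Int.ceil_pos.mpr (hw i)
      have hacast : ∀ i, ((a i : ℤ)) = ⌈w i⌉ - 1 := fun i => Int.toNat_of_nonneg (by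
        have := hceil i; omega)
      have hacastR : ∀ i, ((a i : ℝ)) = (⌈w i⌉ : ℝ) - 1 := by
        intro i
        exact_mod_cast congrArg (fun u : ℤ => (u : ℝ)) (hacast i)
      set c : ↑s → ℝ := fun i => w i - (a i : ℝ) with hc_def
      have hc : ∀ i, 0 < c i ∧ c i ≤ 1 := by
        intro i
        constructor
        · have := Int.ceil_lt_add_one (w i)
          simp only [hc_def, hacastR]
          linarith
        · have := Int.le_ceil (w i)
          simp only [hc_def, hacastR]
          linarith
      refine ⟨(x - ∑ i, a i • z i, (t:ℤ) - ∑ i, (a i : ℤ)), ⟨c, hc, ?_, ?_⟩, a, ?_, ?_⟩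
      · simp only [hc_def, Finset.sum_sub_distrib, hwsum]
        push_cast
        ring
      · simp only [hc_def, sub_smul, Finset.sum_sub_distrib, hwrep, iota_sub, iota_sum]
        congr 1
        refine Finset.sum_congr rfl (fun i _ => ?_)
        rw [iota_nsmul, hz i]
      · simp only [Set.mem_setOf_eq]
        ring
      · simp only []
        abel
    · rintro ⟨y, hyP, a, ha, rfl⟩
      obtain ⟨c, hc, hcsum, hcrep⟩ := hyP
      have hsuma : ∑ i, (a i : ℝ) = (t:ℝ) - (y.2 : ℝ) := by exact_mod_cast ha
      refine ⟨fun i => c i + (a i : ℝ), fun i => add_pos_of_pos_of_nonneg (hc i).1 (Nat.cast_nonneg _), ?_, ?_⟩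
      · simp only [Finset.sum_add_distrib, hcsum, hsuma]; ring
      · rw [iota_add, iota_sum]
        simp only [add_smul, Finset.sum_add_distrib, hcrep]
        congr 1
        refine Finset.sum_congr rfl (fun i _ => ?_)
        rw [iota_nsmul, hz i]
  -- finiteness and cardinality of fibers
  have hy2t : ∀ y ∈ P, y.2 ≤ (t : ℤ) := fun y hy =>
    le_trans (hy2 y hy).2 (by exact_mod_cast hmt)
  have hMset : ∀ y ∈ P, {a : ↑s → ℕ | (∑ i, (a i : ℤ)) = (t:ℤ) - y.2}
      = {a : ↑s → ℕ | ∑ i, a i = ((t:ℤ) - y.2).toNat} := by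
    intro y hy
    ext a
    have hcast : (∑ i, (a i : ℤ)) = ((∑ i, a i : ℕ) : ℤ) := by push_cast; rfl
    simp only [Set.mem_setOf_eq, hcast]
    have h1 := (hy2 y hy).1
    have h2 := hy2t y hy
    omega
  have hGeq : ∀ y ∈ P, G y = (fun a : ↑s → ℕ => y.1 + ∑ i, a i • z i) ''
      {a : ↑s → ℕ | ∑ i, a i = ((t:ℤ) - y.2).toNat} := by
    intro y hy
    simp only [hG_def]
    rw [hMset y hy]
  have hGfin : ∀ y ∈ P, (G y).Finite := by
    intro y hy
    rw [hGeq y hy]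
    exact (finite_sum_eq _).image _
  have hGcard : ∀ y ∈ P, (G y).ncard
      = (s.card + ((t:ℤ) - y.2).toNat - 1).choose (((t:ℤ) - y.2).toNat) := by
    intro y hy
    have hinj : Set.InjOn (fun a : ↑s → ℕ => y.1 + ∑ i, a i • z i)
        {a : ↑s → ℕ | (∑ i, (a i : ℤ)) = (t:ℤ) - y.2} := by
      intro a ha a' ha' heq
      exact (hmaster y hy y hy a a' ha ha' heq).2
    have h1 : (G y).ncard = {a : ↑s → ℕ | (∑ i, (a i : ℤ)) = (t:ℤ) - y.2}.ncard :=
      Set.ncard_image_of_injOn hinj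
    rw [h1, hMset y hy, ncard_sum_eq, hcardcoe]
  have hGdisj : ∀ y ∈ P, ∀ y' ∈ P, y ≠ y' → Disjoint (G y) (G y') := by
    intro y hy y' hy' hne'
    rw [Set.disjoint_left]
    rintro x ⟨a, ha, rfl⟩ ⟨a', ha', heq⟩
    exact hne' (hmaster y hy y' hy' a a' ha ha' heq.symm).1
  set F : Finset ((Fin d → ℤ) × ℤ) := hPfin.toFinset with hF_def
  have hTeq : T = ⋃ y ∈ F, G y := by
    rw [hcover]
    ext x
    simp only [Set.mem_iUnion, exists_prop, hF_def, Set.Finite.mem_toFinset]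
  have hTfin : T.Finite := by
    rw [hTeq]
    exact Set.Finite.biUnion F.finite_toSet
      (fun y hy => hGfin y (hPfin.mem_toFinset.mp hy))
  refine ⟨hTfin, ?_⟩
  have hcount : T.ncard = ∑ y ∈ F, (G y).ncard := by
    rw [hTeq]
    exact ncard_biUnion F G (fun y hy => hGfin y (hPfin.mem_toFinset.mp hy))
      (fun y hy y' hy' h => hGdisj y (hPfin.mem_toFinset.mp hy) y' (hPfin.mem_toFinset.mp hy') h)
  haveI : NeZero n := ⟨Nat.pos_iff_ne_zero.mp hn⟩
  rw [← ZMod.intCast_eq_intCast_iff]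
  push_cast
  rw [hcount]
  push_cast
  set y₀ : (Fin d → ℤ) × ℤ := (∑ i, z i, (s.card : ℤ)) with hy₀_def
  have hy₀P : y₀ ∈ P := by
    refine ⟨fun _ => 1, fun i => ⟨one_pos, le_refl 1⟩, ?_, ?_⟩
    · have h1 : (y₀.2 : ℝ) = (s.card : ℝ) := by simp [hy₀_def]
      rw [h1]; simp [hcardcoe]
    · have h1 : y₀.1 = ∑ i, z i := by simp [hy₀_def]
      rw [h1, iota_sum]
      simp only [one_smul]
      exact Finset.sum_congr rfl (fun i _ => (hz i).symm) |>.symm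
  rw [Finset.sum_eq_single_of_mem y₀ (hPfin.mem_toFinset.mpr hy₀P)]
  · -- main term
    have hM₀ : ((t:ℤ) - y₀.2).toNat = t - s.card := by
      have h1 : y₀.2 = (s.card : ℤ) := by simp [hy₀_def]
      rw [h1]; omega
    rw [hGcard y₀ hy₀P, hM₀]
    have harith : s.card + (t - s.card) - 1 = t - 1 := by omega
    rw [harith]
    have hsymm : (t - 1).choose (t - s.card) = (t - 1).choose (s.card - 1) := by
      have h1 : s.card - 1 ≤ t - 1 := by omega
      have h2 : (t - 1) - (s.card - 1) = t - s.card := by omega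
      rw [← h2]
      exact Nat.choose_symm h1
    rw [hsymm]
    have hmod := choose_sub_one (n := n) (t := t) (k := s.card - 1) htpos
      (fun i h1 h2 => hdvd i h1 (by omega))
    have hfin := (ZMod.intCast_eq_intCast_iff _ _ _).mpr hmod
    push_cast at hfin
    exact hfin
  · -- side terms vanish
    intro y hyF hyne
    have hyP : y ∈ P := hPfin.mem_toFinset.mp hyF
    have hb := hy2 y hyP
    have hlt : y.2 < (s.card : ℤ) := by
      rcases lt_or_eq_of_le hb.2 with h | h
      · exact h
      · exfalso
        apply hyne
        obtain ⟨c, hc, hcsum, hcrep⟩ := hyP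
        have hy2R : (y.2 : ℝ) = (s.card : ℝ) := by exact_mod_cast h
        have hcall : ∀ i, c i = 1 := by
          have hone : ∑ _i : ↑s, (1:ℝ) = (s.card : ℝ) := by simp [hcardcoe]
          have hsum0 : ∑ i : ↑s, (1 - c i) = 0 := by
            rw [Finset.sum_sub_distrib, hcsum, hone, hy2R, sub_self]
          have hz0 := (Finset.sum_eq_zero_iff_of_nonneg
            (fun i _ => by linarith [(hc i).2])).mp hsum0
          intro i
          have := hz0 i (Finset.mem_univ i)
          linarith
        have hy1 : y.1 = ∑ i, z i := by
          apply iota_inj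
          rw [← hcrep, iota_sum]
          refine Finset.sum_congr rfl (fun i _ => ?_)
          rw [hcall i, one_smul, hz i]
        exact Prod.ext hy1 h
    rw [hGcard y hyP]
    set M : ℕ := ((t:ℤ) - y.2).toNat with hM_def
    set j : ℕ := ((s.card : ℤ) - 1 - y.2).toNat with hj_def
    have hmtZ : (s.card : ℤ) ≤ (t : ℤ) := by exact_mod_cast hmt
    have h1 := hb.1
    have hMj1 : s.card + M - 1 = t + j := by omega
    have hMj2 : M = (t + j) - (s.card - 1) := by omega
    have hMj3 : j < s.card - 1 := by omega
    rw [hMj1]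
    have hsymm : (t + j).choose M = (t + j).choose (s.card - 1) := by
      have hle : s.card - 1 ≤ t + j := by omega
      rw [← Nat.choose_symm hle, ← hMj2]
    rw [hsymm]
    rw [ZMod.natCast_eq_zero_iff]
    exact dvd_choose_add hMj3 (fun i hi1 hi2 => hdvd i hi1 (by omega))


end AT

open scoped Pointwise

/-- **Akopyan–Tagami, main theorem.**
For any natural numbers `d ≥ 1` and `n > 1` there exists a natural number `t ≥ 1` such
that for every finite simplicial complex `K` in `ℝ^d` all of whose vertices lie in `ℤ^d`,
the number of lattice points in the dilate `t • |K|` of the underlying polyhedron is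
congruent to the Euler characteristic of `K` modulo `n`. -/
theorem lattice_points_in_dilated_complex_eq_euler_char_mod
    (d n : ℕ) (hd : 1 ≤ d) (hn : 1 < n) :
    ∃ t : ℕ, 1 ≤ t ∧
      ∀ (K : Geometry.SimplicialComplex ℝ (Fin d → ℝ)) (hfin : K.faces.Finite),
        (∀ s ∈ K.faces, ∀ x ∈ s, ∃ z : Fin d → ℤ, x = fun i => (z i : ℝ)) →
        (({x : Fin d → ℤ | (fun i => (x i : ℝ)) ∈ (t : ℝ) • K.space}.ncard : ℤ))
          ≡ (∑ s ∈ hfin.toFinset, (-1 : ℤ) ^ (s.card - 1)) [ZMOD (n : ℤ)] := by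
  classical
  refine ⟨n * Nat.factorial (d+1), Nat.one_le_iff_ne_zero.mpr
    (Nat.mul_ne_zero (by omega) (Nat.factorial_pos _).ne'), ?_⟩
  intro K hfin hlat
  set t : ℕ := n * Nat.factorial (d+1) with ht_def
  have htpos : (0:ℝ) < (t:ℝ) := by
    have : 1 ≤ t := Nat.one_le_iff_ne_zero.mpr (Nat.mul_ne_zero (by omega) (Nat.factorial_pos _).ne')
    exact_mod_cast Nat.lt_of_lt_of_le Nat.zero_lt_one this
  have htne : (t:ℝ) ≠ 0 := ne_of_gt htpos
  -- the open simplicial pieces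
  set T : Finset (Fin d → ℝ) → Set (Fin d → ℤ) := fun s =>
    {x | ∃ w : ↑s → ℝ, (∀ i, 0 < w i) ∧ ∑ i, w i = (t:ℝ) ∧
      ∑ i, w i • (i : Fin d → ℝ) = AT.iota x} with hT_def
  -- each point of a dilated piece is in the dilated convex hull
  have hTsub : ∀ s : Finset (Fin d → ℝ), ∀ x ∈ T s,
      (t:ℝ)⁻¹ • AT.iota x ∈ convexHull ℝ (s : Set (Fin d → ℝ)) := by
    intro s x hx
    obtain ⟨w, hw, hwsum, hwrep⟩ := hx
    rw [Finset.convexHull_eq]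
    refine ⟨fun v => if h : v ∈ s then w ⟨v, h⟩ / t else 0, ?_, ?_, ?_⟩
    · intro y hy
      simp only [dif_pos hy]
      exact le_of_lt (div_pos (hw _) htpos)
    · rw [← Finset.sum_attach s (fun v => if h : v ∈ s then w ⟨v, h⟩ / t else 0)]
      have : ∀ i : ↑s, (if h : (i:Fin d → ℝ) ∈ s then w ⟨i, h⟩ / t else 0) = w i / t := by
        intro i; rw [dif_pos i.2]
      rw [Finset.sum_congr rfl (fun i _ => this i), ← Finset.sum_div,
        show s.attach = (Finset.univ : Finset ↑s) from rfl, hwsum, div_self htne]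
    · rw [Finset.centerMass_eq_of_sum_1]
      · rw [← Finset.sum_attach s (fun v => (if h : v ∈ s then w ⟨v, h⟩ / t else 0) • id v)]
        have : ∀ i : ↑s, (if h : (i:Fin d → ℝ) ∈ s then w ⟨i, h⟩ / t else 0) • id (i : Fin d → ℝ)
            = (t:ℝ)⁻¹ • (w i • (i : Fin d → ℝ)) := by
          intro i
          rw [dif_pos i.2]
          simp [div_eq_inv_mul, smul_smul, id]
        rw [Finset.sum_congr rfl (fun i _ => this i), ← Finset.smul_sum,
          show s.attach = (Finset.univ : Finset ↑s) from rfl, hwrep]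
      · rw [← Finset.sum_attach s (fun v => if h : v ∈ s then w ⟨v, h⟩ / t else 0)]
        have : ∀ i : ↑s, (if h : (i:Fin d → ℝ) ∈ s then w ⟨i, h⟩ / t else 0) = w i / t := by
          intro i; rw [dif_pos i.2]
        rw [Finset.sum_congr rfl (fun i _ => this i), ← Finset.sum_div,
          show s.attach = (Finset.univ : Finset ↑s) from rfl, hwsum, div_self htne]
  -- covering
  have hcover : {x : Fin d → ℤ | (fun i => ((x i : ℝ))) ∈ (t : ℝ) • K.space}
      = ⋃ s ∈ K.faces, T s := by
    ext x
    simp only [Set.mem_setOf_eq, Set.mem_iUnion, exists_prop]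
    constructor
    · rintro hx
      obtain ⟨y, hy, hxy⟩ := hx
      rw [Geometry.SimplicialComplex.mem_space_iff] at hy
      obtain ⟨s, hs, hys⟩ := hy
      rw [Finset.convexHull_eq] at hys
      obtain ⟨w, hw0, hwsum, hwc⟩ := hys
      rw [Finset.centerMass_eq_of_sum_1 _ _ hwsum] at hwc
      simp only [id] at hwc
      set r : Finset (Fin d → ℝ) := s.filter (fun i => w i ≠ 0) with hr_def
      have hrsum : ∑ i ∈ r, w i = 1 := by
        rw [hr_def, Finset.sum_filter_ne_zero, hwsum]
      have hrne : r ≠ ∅ := by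
        intro h
        rw [h, Finset.sum_empty] at hrsum
        norm_num at hrsum
      have hrface : r ∈ K.faces := K.down_closed hs (Finset.filter_subset _ _) (Finset.nonempty_iff_ne_empty.mpr hrne)
      refine ⟨r, hrface, ?_⟩
      refine ⟨fun i => t * w ↑i, ?_, ?_, ?_⟩
      · intro i
        obtain ⟨his, hwne⟩ := Finset.mem_filter.mp i.2
        show (0:ℝ) < (t:ℝ) * w ↑i
        exact mul_pos htpos (lt_of_le_of_ne (hw0 _ his) (Ne.symm hwne))
      · rw [Finset.sum_coe_sort r (fun i => t * w i), ← Finset.mul_sum, hrsum, mul_one]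
      · have hsum_r : ∑ i ∈ r, w i • i = ∑ i ∈ s, w i • i := by
          refine Finset.sum_subset (Finset.filter_subset _ _) ?_
          intro i hi hir
          rw [hr_def, Finset.mem_filter] at hir
          push_neg at hir
          rw [hir hi, zero_smul]
        calc ∑ i : ↑r, (t * w ↑i) • (i : Fin d → ℝ)
            = ∑ i ∈ r, (t * w i) • i := Finset.sum_coe_sort r (fun i => (t * w i) • i)
          _ = (t:ℝ) • ∑ i ∈ r, w i • i := by
              rw [Finset.smul_sum]
              exact Finset.sum_congr rfl (fun i _ => by rw [smul_smul])
          _ = (t:ℝ) • y := by rw [hsum_r, hwc]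
          _ = AT.iota x := hxy
    · rintro ⟨s, hs, hx⟩
      have hy := hTsub s x hx
      have : AT.iota x = (t:ℝ) • ((t:ℝ)⁻¹ • AT.iota x) := by
        rw [smul_inv_smul₀ htne]
      rw [show (fun i => ((x i : ℝ))) = AT.iota x from rfl, this]
      exact Set.smul_mem_smul_set (Geometry.SimplicialComplex.convexHull_subset_space hs hy)
  -- disjointness
  have hdisj : ∀ s ∈ K.faces, ∀ s' ∈ K.faces, s ≠ s' → Disjoint (T s) (T s') := by
    have key : ∀ s ∈ K.faces, ∀ s' ∈ K.faces, ∀ x, x ∈ T s → x ∈ T s' → s ⊆ s' := by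
      intro s hs s' hs' x hxs hxs'
      obtain ⟨w, hw, hwsum, hwrep⟩ := hxs
      have hmem : (t:ℝ)⁻¹ • AT.iota x ∈ convexHull ℝ ((s ∩ s' : Finset (Fin d → ℝ)) : Set (Fin d → ℝ)) := by
        have h1 := hTsub s x ⟨w, hw, hwsum, hwrep⟩
        have h2 := hTsub s' x hxs'
        have h3 := K.inter_subset_convexHull hs hs' ⟨h1, h2⟩
        rwa [← Finset.coe_inter] at h3
      rw [Finset.convexHull_eq] at hmem
      obtain ⟨u, hu0, husum, huc⟩ := hmem
      rw [Finset.centerMass_eq_of_sum_1 _ _ husum] at huc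
      simp only [id] at huc
      set w₂ : ↑s → ℝ := fun i => if ↑i ∈ s ∩ s' then (t:ℝ) * u ↑i else 0 with hw₂_def
      have hinter : s ∩ (s ∩ s') = s ∩ s' := by rw [← Finset.inter_assoc, Finset.inter_self]
      have hsum₂ : ∑ i : ↑s, w₂ i = (t:ℝ) := by
        rw [hw₂_def]
        rw [Finset.sum_coe_sort s (fun i => if i ∈ s ∩ s' then (t:ℝ) * u i else 0)]
        rw [Finset.sum_ite_mem, hinter, ← Finset.mul_sum, husum, mul_one]
      have hrep₂ : ∑ i : ↑s, w₂ i • (i : Fin d → ℝ) = AT.iota x := by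
        rw [hw₂_def]
        have hstep : ∀ i : ↑s, (if (↑i:Fin d → ℝ) ∈ s ∩ s' then (t:ℝ) * u ↑i else 0) • (i : Fin d → ℝ)
            = (if (↑i:Fin d → ℝ) ∈ s ∩ s' then ((t:ℝ) * u ↑i) • (i:Fin d → ℝ) else 0) := by
          intro i
          split <;> simp
        rw [Finset.sum_congr rfl (fun i _ => hstep i)]
        rw [Finset.sum_coe_sort s (fun i => if i ∈ s ∩ s' then ((t:ℝ) * u i) • i else 0)]
        rw [Finset.sum_ite_mem, hinter]
        have hsm : ∑ i ∈ s ∩ s', ((t:ℝ) * u i) • i = (t:ℝ) • ∑ i ∈ s ∩ s', u i • i := by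
          rw [Finset.smul_sum]
          exact Finset.sum_congr rfl (fun i _ => by rw [smul_smul])
        rw [hsm, huc, smul_inv_smul₀ htne]
      have heqw : ∀ i : ↑s, w i = w₂ i := by
        intro i
        exact (K.indep hs).eq_of_sum_eq_sum (by rw [hwsum, hsum₂])
          (by rw [hwrep, hrep₂]) i (Finset.mem_univ i)
      intro v hv
      have hvv := heqw ⟨v, hv⟩
      by_contra hv'
      rw [hw₂_def] at hvv
      simp only at hvv
      rw [if_neg (fun hmem => hv' (Finset.mem_inter.mp hmem).2)] at hvv
      exact absurd hvv (ne_of_gt (hw ⟨v, hv⟩))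
    intro s hs s' hs' hne
    rw [Set.disjoint_left]
    intro x hxs hxs'
    exact hne (Finset.Subset.antisymm (key s hs s' hs' x hxs hxs') (key s' hs' s hs x hxs' hxs))
  -- facts about faces
  have hface : ∀ s ∈ K.faces, (T s).Finite ∧ ((T s).ncard : ℤ) ≡ (-1)^(s.card-1) [ZMOD (n:ℤ)] := by
    intro s hs
    have hne : s.Nonempty := Finset.nonempty_iff_ne_empty.mpr (fun h => K.empty_notMem (h ▸ hs))
    have hcard : s.card ≤ d + 1 := by
      have h1 := (K.indep hs).card_le_finrank_succ
      have h2 : Module.finrank ℝ ↥(vectorSpan ℝ (Set.range ((↑) : ↑s → (Fin d → ℝ)))) ≤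
          Module.finrank ℝ (Fin d → ℝ) := Submodule.finrank_le _
      have h3 : Module.finrank ℝ (Fin d → ℝ) = d := by simp
      rw [Fintype.card_coe] at h1
      omega
    have hlat' : ∀ y ∈ s, ∃ z : Fin d → ℤ, y = AT.iota z := fun y hy => hlat s hs y hy
    exact AT.face_count (by omega) s (K.indep hs) hlat' hne hcard
  -- assemble
  have hcover' : {x : Fin d → ℤ | (fun i => ((x i : ℝ))) ∈ (t : ℝ) • K.space}
      = ⋃ s ∈ hfin.toFinset, T s := by
    rw [hcover]
    ext x
    simp only [Set.mem_iUnion, exists_prop, Set.Finite.mem_toFinset]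
  have hcount : {x : Fin d → ℤ | (fun i => ((x i : ℝ))) ∈ (t : ℝ) • K.space}.ncard
      = ∑ s ∈ hfin.toFinset, (T s).ncard := by
    rw [hcover']
    exact AT.ncard_biUnion _ _ (fun s hsF => (hface s (hfin.mem_toFinset.mp hsF)).1)
      (fun s hsF s' hsF' h => hdisj s (hfin.mem_toFinset.mp hsF) s' (hfin.mem_toFinset.mp hsF') h)
  haveI : NeZero n := ⟨Nat.pos_iff_ne_zero.mp (lt_trans Nat.zero_lt_one hn)⟩
  rw [← ZMod.intCast_eq_intCast_iff]
  push_cast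
  rw [hcount]
  push_cast
  refine Finset.sum_congr rfl (fun s hsF => ?_)
  have h := (hface s (hfin.mem_toFinset.mp hsF)).2
  have h2 := (ZMod.intCast_eq_intCast_iff _ _ _).mpr h
  push_cast at h2
  exact h2
end

section
/- Let P be a convex polytope in ℝ^d with all vertices in the integer lattice ℤ^d, let p be a prime number, and set l = ⌊log_p d⌋. Then for every natural number k > l, the number of points of ℤ^d contained in the dilated polytope p^k·P is congruent to 1 modulo p^(k−l). -/
open scoped Pointwise
open Finset

namespace AT

variable {N : ℕ}

/-- Hand-rolled lexicographic (non-strict) order on `Fin N → ℝ`. -/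
def LexLE (a b : Fin N → ℝ) : Prop :=
  a = b ∨ ∃ i : Fin N, (∀ j, j < i → a j = b j) ∧ a i < b i

lemma lexLE_refl (a : Fin N → ℝ) : LexLE a a := Or.inl rfl

lemma LexLE.antisymm {a b : Fin N → ℝ} (h1 : LexLE a b) (h2 : LexLE b a) : a = b := by
  rcases h1 with h1 | ⟨i, hi, hlt⟩
  · exact h1
  rcases h2 with h2 | ⟨i', hi', hlt'⟩
  · exact h2.symm
  rcases lt_trichotomy i i' with h | h | h
  · exact absurd (hi' i h) (ne_of_gt hlt)
  · subst h; exact absurd (hlt.trans hlt') (lt_irrefl _)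
  · exact absurd (hi i' h) (ne_of_gt hlt')

lemma lexLE_add_right {a b c : Fin N → ℝ} (h : LexLE a b) : LexLE (a + c) (b + c) := by
  rcases h with h | ⟨i, hi, hlt⟩
  · exact Or.inl (by rw [h])
  · exact Or.inr ⟨i, fun j hj => by simp [hi j hj], by simpa using hlt⟩

lemma lexLE_add_right_iff {a b c : Fin N → ℝ} : LexLE (a + c) (b + c) ↔ LexLE a b := by
  constructor
  · intro h
    have := lexLE_add_right (c := -c) h
    simpa using this
  · exact lexLE_add_right

lemma lexLE_smul_nonpos {s : ℝ} (hs : 0 < s) {c : Fin N → ℝ} (h : LexLE (s • c) 0) :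
    LexLE c 0 := by
  rcases h with h | ⟨i, hi, hlt⟩
  · left
    funext j
    have := congrFun h j
    simp only [Pi.smul_apply, smul_eq_mul, Pi.zero_apply] at this ⊢
    exact by nlinarith
  · right
    refine ⟨i, fun j hj => ?_, ?_⟩
    · have := hi j hj
      simp only [Pi.smul_apply, smul_eq_mul, Pi.zero_apply] at this ⊢
      nlinarith
    · have : s * c i < 0 := by simpa using hlt
      simp only [Pi.zero_apply]
      nlinarith

/-- From `LexLE (μ + s • (ν - μ')) μ` with `0 < s` conclude `LexLE ν μ'` shifted:
    auxiliary form: `LexLE (a) 0 → LexLE (a + b) b`. -/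
lemma lexLE_of_sub {a b : Fin N → ℝ} (h : LexLE (a - b) 0) : LexLE a b := by
  have := lexLE_add_right (c := b) h
  simpa using this

lemma lexLE_sub_of {a b : Fin N → ℝ} (h : LexLE a b) : LexLE (a - b) 0 := by
  have := lexLE_add_right (c := -b) h
  simpa [sub_eq_add_neg] using this

/-- Existence of a lex-maximum in a nonempty compact set. -/
lemma exists_lex_max {K : Set (Fin N → ℝ)} (hK : IsCompact K) (hne : K.Nonempty) :
    ∃ μ ∈ K, ∀ ν ∈ K, LexLE ν μ := by
  classical
  -- iterative maximization
  let step : ℕ → Set (Fin N → ℝ) → Set (Fin N → ℝ) := fun j Kj =>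
    if h : j < N then {μ ∈ Kj | μ ⟨j, h⟩ = sSup ((fun μ : Fin N → ℝ => μ ⟨j, h⟩) '' Kj)} else Kj
  let chain : ℕ → Set (Fin N → ℝ) := fun j => Nat.rec K step j
  have hchain_succ : ∀ j, chain (j + 1) = step j (chain j) := fun j => rfl
  have key : ∀ j, IsCompact (chain j) ∧ (chain j).Nonempty := by
    intro j
    induction j with
    | zero => exact ⟨hK, hne⟩
    | succ j ih =>
      rcases ih with ⟨hc, hn⟩
      rw [hchain_succ]
      by_cases h : j < N
      · simp only [step, dif_pos h]
        have himg : IsCompact ((fun μ : Fin N → ℝ => μ ⟨j, h⟩) '' chain j) :=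
          hc.image (continuous_apply _)
        have hsup : sSup ((fun μ : Fin N → ℝ => μ ⟨j, h⟩) '' chain j)
            ∈ ((fun μ : Fin N → ℝ => μ ⟨j, h⟩) '' chain j) :=
          himg.sSup_mem (hn.image _)
        rcases hsup with ⟨μ0, hμ0, hμ0eq⟩
        constructor
        · have : {μ ∈ chain j | μ ⟨j, h⟩ = sSup ((fun μ : Fin N → ℝ => μ ⟨j, h⟩) '' chain j)}
              = chain j ∩ ((fun μ : Fin N → ℝ => μ ⟨j, h⟩) ⁻¹' {sSup ((fun μ : Fin N → ℝ => μ ⟨j, h⟩) '' chain j)}) := by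
            ext; simp [Set.mem_inter_iff, Set.mem_preimage]
          rw [this]
          exact hc.inter_right (isClosed_singleton.preimage (continuous_apply _))
        · exact ⟨μ0, hμ0, hμ0eq⟩
      · simpa only [step, dif_neg h] using ⟨hc, hn⟩
  have hmono : ∀ j, chain (j + 1) ⊆ chain j := by
    intro j
    rw [hchain_succ]
    by_cases h : j < N
    · simp only [step, dif_pos h]; exact fun μ hμ => hμ.1
    · simp only [step, dif_neg h]; exact fun μ hμ => hμ
  have hmono' : ∀ {j j'}, j ≤ j' → chain j' ⊆ chain j := by
    intro j j' h
    induction h with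
    | refl => exact fun _ h => h
    | step h ih => intro μ hμ; exact ih (hmono _ hμ)
  obtain ⟨μ, hμ⟩ := (key N).2
  refine ⟨μ, hmono' (Nat.zero_le N) hμ, ?_⟩
  intro ν hν
  by_cases heq : ν = μ
  · exact Or.inl heq
  -- first index where they differ
  have hne' : (univ.filter (fun i : Fin N => ν i ≠ μ i)).Nonempty := by
    by_contra hcon
    apply heq
    funext i
    by_contra hi
    exact hcon ⟨i, by simp [hi]⟩
  set D := univ.filter (fun i : Fin N => ν i ≠ μ i) with hD
  set i₀ := D.min' hne' with hi₀
  have hi₀mem : i₀ ∈ D := D.min'_mem hne'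
  have hi₀ne : ν i₀ ≠ μ i₀ := by
    have := hi₀mem; rw [hD] at this; simpa using this
  have hbefore : ∀ j : Fin N, j < i₀ → ν j = μ j := by
    intro j hj
    by_contra hcon
    have : j ∈ D := by rw [hD]; simp [hcon]
    exact absurd (D.min'_le j this) (not_le.mpr hj)
  -- ν belongs to chain j for all j ≤ i₀
  have hνchain : ∀ jj : ℕ, jj ≤ (i₀ : ℕ) → ν ∈ chain jj := by
    intro jj
    induction jj with
    | zero => intro _; exact hν
    | succ jj ih =>
      intro hjj
      have hjlt : jj < (i₀ : ℕ) := Nat.lt_of_succ_le hjj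
      have hjN : jj < N := lt_trans hjlt i₀.isLt
      rw [hchain_succ]
      simp only [step, dif_pos hjN]
      refine ⟨ih (le_of_lt hjlt), ?_⟩
      have hμc : μ ∈ chain (jj + 1) := hmono' (Nat.succ_le_of_lt hjN) hμ
      rw [hchain_succ] at hμc
      simp only [step, dif_pos hjN] at hμc
      have : ν ⟨jj, hjN⟩ = μ ⟨jj, hjN⟩ := hbefore ⟨jj, hjN⟩ (by exact hjlt)
      rw [this, hμc.2]
  have hνi₀ : ν ∈ chain (i₀ : ℕ) := hνchain _ le_rfl
  have hμi₀ : μ ∈ chain ((i₀ : ℕ) + 1) := hmono' (Nat.succ_le_of_lt i₀.isLt) hμ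
  rw [hchain_succ] at hμi₀
  simp only [step, dif_pos i₀.isLt] at hμi₀
  have hle : ν i₀ ≤ μ i₀ := by
    have hbdd : BddAbove ((fun μ : Fin N → ℝ => μ ⟨(i₀:ℕ), i₀.isLt⟩) '' chain (i₀:ℕ)) :=
      ((key _).1.image (continuous_apply _)).bddAbove
    have hmem : ν ⟨(i₀:ℕ), i₀.isLt⟩ ∈ ((fun μ : Fin N → ℝ => μ ⟨(i₀:ℕ), i₀.isLt⟩) '' chain (i₀:ℕ)) :=
      ⟨ν, hνi₀, rfl⟩
    have := le_csSup hbdd hmem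
    rw [← hμi₀.2] at this
    simpa using this
  exact Or.inr ⟨i₀, hbefore, lt_of_le_of_ne hle hi₀ne⟩


variable {d : ℕ} (v : Fin N → Fin d → ℤ)

/-- The point in `ℝ^d` represented by weights `μ`. -/
def pt (μ : Fin N → ℝ) : Fin d → ℝ := fun c => ∑ i, μ i * (v i c : ℝ)

/-- Total weight. -/
def ht (μ : Fin N → ℝ) : ℝ := ∑ i, μ i

lemma pt_add (μ ν : Fin N → ℝ) : pt v (μ + ν) = pt v μ + pt v ν := by
  funext c; simp [pt, add_mul, Finset.sum_add_distrib]

lemma pt_sub (μ ν : Fin N → ℝ) : pt v (μ - ν) = pt v μ - pt v ν := by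
  funext c; simp [pt, sub_mul, Finset.sum_sub_distrib]

lemma ht_add (μ ν : Fin N → ℝ) : ht (μ + ν) = ht μ + ht ν := by
  simp [ht, Finset.sum_add_distrib]

lemma ht_sub (μ ν : Fin N → ℝ) : ht (μ - ν) = ht μ - ht ν := by
  simp [ht, Finset.sum_sub_distrib]


lemma ht_smul (s : ℝ) (μ : Fin N → ℝ) : ht (s • μ) = s * ht μ := by
  simp [ht, Finset.mul_sum]

lemma pt_smul (s : ℝ) (μ : Fin N → ℝ) : pt v (s • μ) = s • pt v μ := by
  funext c; simp [pt, Finset.mul_sum]; apply Finset.sum_congr rfl; intros; ring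

lemma ht_single (j : Fin N) : ht (Pi.single j (1:ℝ)) = 1 := by
  classical
  simp [ht]

lemma pt_single (j : Fin N) : pt v (Pi.single j (1:ℝ)) = fun c => (v j c : ℝ) := by
  classical
  funext c
  simp [pt, Pi.single_apply]

/-- `μ` is the lexicographically maximal nonnegative representation of its own
point-and-weight data. -/
def IsLM (μ : Fin N → ℝ) : Prop :=
  (∀ i, 0 ≤ μ i) ∧
    ∀ ν : Fin N → ℝ, (∀ i, 0 ≤ ν i) → ht ν = ht μ → pt v ν = pt v μ → LexLE ν μ

/-- Existence: any nonnegative weight vector is dominated by a lex-maximal one with the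
same data. -/
lemma exists_isLM (μ0 : Fin N → ℝ) (h0 : ∀ i, 0 ≤ μ0 i) :
    ∃ μ, IsLM v μ ∧ ht μ = ht μ0 ∧ pt v μ = pt v μ0 := by
  classical
  set K : Set (Fin N → ℝ) :=
    {μ | (∀ i, 0 ≤ μ i) ∧ ht μ = ht μ0 ∧ pt v μ = pt v μ0} with hKdef
  have hKne : K.Nonempty := ⟨μ0, h0, rfl, rfl⟩
  have hKc : IsCompact K := by
    have hsub : K ⊆ Set.pi Set.univ (fun _ : Fin N => Set.Icc (0 : ℝ) (ht μ0)) := by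
      intro μ hμ
      intro i _
      refine ⟨hμ.1 i, ?_⟩
      have : μ i ≤ ∑ i, μ i := Finset.single_le_sum (fun i _ => hμ.1 i) (mem_univ i)
      calc μ i ≤ ht μ := this
      _ = ht μ0 := hμ.2.1
    have hclosed : IsClosed K := by
      have h1 : IsClosed {μ : Fin N → ℝ | ∀ i, 0 ≤ μ i} := by
        have : {μ : Fin N → ℝ | ∀ i, 0 ≤ μ i} = ⋂ i, (fun μ : Fin N → ℝ => μ i) ⁻¹' (Set.Ici 0) := by
          ext; simp [Set.mem_iInter]
        rw [this]
        exact isClosed_iInter fun i => isClosed_Ici.preimage (continuous_apply i)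
      have h2 : IsClosed {μ : Fin N → ℝ | ht μ = ht μ0} :=
        isClosed_eq (by unfold ht; exact continuous_finset_sum _ (fun i _ => continuous_apply i)) continuous_const
      have h3 : IsClosed {μ : Fin N → ℝ | pt v μ = pt v μ0} := by
        have : {μ : Fin N → ℝ | pt v μ = pt v μ0}
            = ⋂ c, {μ : Fin N → ℝ | pt v μ c = pt v μ0 c} := by
          ext μ; simp only [Set.mem_iInter, Set.mem_setOf_eq]
          exact ⟨fun h c => by rw [h], fun h => funext h⟩
        rw [this]
        refine isClosed_iInter fun c => isClosed_eq ?_ continuous_const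
        unfold pt
        continuity
      have : K = {μ : Fin N → ℝ | ∀ i, 0 ≤ μ i} ∩ ({μ | ht μ = ht μ0} ∩ {μ | pt v μ = pt v μ0}) := by
        ext μ; simp [hKdef, and_assoc]
      rw [this]
      exact h1.inter (h2.inter h3)
    exact (isCompact_univ_pi (fun _ => isCompact_Icc)).of_isClosed_subset hclosed hsub
  obtain ⟨μ, hμK, hmax⟩ := exists_lex_max hKc hKne
  refine ⟨μ, ⟨hμK.1, ?_⟩, hμK.2.1, hμK.2.2⟩
  intro ν hν hht hpt
  exact hmax ν ⟨hν, by rw [hht, hμK.2.1], by rw [hpt, hμK.2.2]⟩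

lemma isLM_unique {μ μ' : Fin N → ℝ} (h : IsLM v μ) (h' : IsLM v μ')
    (hht : ht μ = ht μ') (hpt : pt v μ = pt v μ') : μ = μ' :=
  (h'.2 μ h.1 hht hpt).antisymm (h.2 μ' h'.1 hht.symm hpt.symm)

/-- Restriction property (Claim 1). -/
lemma isLM_of_le {μ μ' : Fin N → ℝ} (hμ : IsLM v μ) (h0 : ∀ i, 0 ≤ μ' i)
    (hle : ∀ i, μ' i ≤ μ i) : IsLM v μ' := by
  refine ⟨h0, ?_⟩
  intro ν hν hht hpt
  have key : LexLE (ν + (μ - μ')) μ := by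
    apply hμ.2
    · intro i; simp only [Pi.add_apply, Pi.sub_apply]
      have := hν i; have := hle i; linarith
    · rw [ht_add, ht_sub, hht]; ring
    · rw [pt_add, pt_sub, hpt]; funext c; simp only [Pi.add_apply, Pi.sub_apply]; ring
  have : LexLE (ν + (μ - μ')) (μ' + (μ - μ')) := by
    have hμeq : μ' + (μ - μ') = μ := by funext i; simp
    rw [hμeq]; exact key
  exact lexLE_add_right_iff.mp this

/-- Adding a unit of an already-used generator (Claim 2). -/
lemma isLM_add_single {μ : Fin N → ℝ} (hμ : IsLM v μ) {j : Fin N} (hj : 0 < μ j) :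
    IsLM v (μ + Pi.single j 1) := by
  classical
  constructor
  · intro i
    by_cases h : i = j
    · subst h; simp; linarith [hμ.1 i]
    · simp [Pi.single_apply, h, hμ.1 i]
  intro ν hν hht hpt
  have hhtν : ht ν = ht μ + 1 := by
    rw [hht, ht_add]
    congr 1
    simp [ht, Pi.single_apply]
  have hptν : pt v ν = pt v μ + pt v (Pi.single j 1) := by rw [hpt, pt_add]
  by_cases hcase : 1 ≤ ν j
  · -- subtract the unit
    have key : LexLE (ν - Pi.single j 1) μ := by
      apply hμ.2
      · intro i
        by_cases h : i = j
        · subst h; simp; linarith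
        · simp [Pi.single_apply, h, hν i]
      · rw [ht_sub, hhtν]
        simp [ht, Pi.single_apply]
      · rw [pt_sub, hptν]; ring
    have := lexLE_add_right (c := Pi.single j 1) key
    simpa using this
  · -- move along the segment
    push_neg at hcase
    set s : ℝ := μ j / (μ j + 1 - ν j) with hs
    have hden : 0 < μ j + 1 - ν j := by linarith
    have hs0 : 0 < s := div_pos hj hden
    have hs1 : s < 1 := by
      rw [hs, div_lt_one hden]; linarith
    set σ : Fin N → ℝ := (1 - s) • μ + s • (ν - Pi.single j 1) with hσ
    have hσj : σ j = 0 := by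
      simp only [hσ, Pi.add_apply, Pi.smul_apply, Pi.sub_apply, smul_eq_mul]
      simp only [Pi.single_eq_same]
      have hsD : s * (μ j + 1 - ν j) = μ j := by rw [hs]; exact div_mul_cancel₀ _ hden.ne'
      linear_combination -hsD
    have key : LexLE σ μ := by
      apply hμ.2
      · intro i
        by_cases h : i = j
        · subst h; rw [hσj]
        · have hsingle : (Pi.single j 1 : Fin N → ℝ) i = 0 := by rw [Pi.single_apply]; simp [h]
          simp only [hσ, Pi.add_apply, Pi.smul_apply, Pi.sub_apply, smul_eq_mul, hsingle]
          have := hν i; have := hμ.1 i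
          nlinarith
      · simp only [hσ]
        rw [ht_add, ht_smul, ht_smul, ht_sub, ht_single, hhtν]; ring
      · simp only [hσ]
        rw [pt_add, pt_smul, pt_smul, pt_sub, hptν]
        funext c; simp only [Pi.add_apply, Pi.smul_apply, Pi.sub_apply, smul_eq_mul]; ring
    -- σ - μ = s • (ν - single j 1 - μ)
    have hfact : σ - μ = s • (ν - Pi.single j 1 - μ) := by
      funext i
      simp only [hσ, Pi.sub_apply, Pi.add_apply, Pi.smul_apply, smul_eq_mul]
      ring
    have h1 : LexLE (σ - μ) 0 := lexLE_sub_of key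
    rw [hfact] at h1
    have h2 : LexLE (ν - Pi.single j 1 - μ) 0 := lexLE_smul_nonpos hs0 h1
    have h3 : LexLE (ν - (μ + Pi.single j 1)) 0 := by
      have : ν - Pi.single j 1 - μ = ν - (μ + Pi.single j 1) := by funext i; simp; ring
      rwa [this] at h2
    exact lexLE_of_sub h3

/-- Iterated version of Claim 2: adding natural multiples of used generators. -/
lemma isLM_add_nat {μ : Fin N → ℝ} (hμ : IsLM v μ) (n : Fin N → ℕ)
    (hsupp : ∀ i, n i ≠ 0 → 0 < μ i) : IsLM v (μ + fun i => (n i : ℝ)) := by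
  classical
  suffices H : ∀ S : ℕ, ∀ (μ : Fin N → ℝ) (n : Fin N → ℕ), IsLM v μ →
      (∀ i, n i ≠ 0 → 0 < μ i) → (∑ i, n i) = S → IsLM v (μ + fun i => (n i : ℝ)) by
    exact H _ μ n hμ hsupp rfl
  intro S
  induction S using Nat.strong_induction_on with
  | _ S ih =>
    intro μ n hμ hsupp hn
    rcases Nat.eq_zero_or_pos S with hS | hS
    · subst hS
      have hzero : ∀ i, n i = 0 := by
        intro i
        exact (Finset.sum_eq_zero_iff.mp hn) i (mem_univ i)
      have : (fun i => ((n i : ℕ) : ℝ)) = 0 := by funext i; simp [hzero i]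
      rw [this, add_zero]
      exact hμ
    · have : ∃ j, n j ≠ 0 := by
        by_contra hcon
        push_neg at hcon
        rw [Finset.sum_eq_zero (fun i _ => hcon i)] at hn
        omega
      obtain ⟨j, hj⟩ := this
      set n' : Fin N → ℕ := Function.update n j (n j - 1) with hn'
      have hμ' : IsLM v (μ + Pi.single j 1) := isLM_add_single v hμ (hsupp j hj)
      have hsupp' : ∀ i, n' i ≠ 0 → 0 < (μ + (Pi.single j 1 : Fin N → ℝ)) i := by
        intro i hi
        by_cases h : i = j
        · subst h; simp only [Pi.add_apply, Pi.single_eq_same]; linarith [hμ.1 i, hsupp i hj]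
        · simp only [hn', Function.update_apply, if_neg h] at hi
          have hsingle : (Pi.single j 1 : Fin N → ℝ) i = 0 := by rw [Pi.single_apply]; simp [h]
          simp only [Pi.add_apply, hsingle, add_zero]
          exact hsupp i hi
      have hsum' : ∑ i, n' i = S - 1 := by
        rw [hn']
        rw [Finset.sum_update_of_mem (mem_univ j)]
        rw [Finset.sdiff_singleton_eq_erase]
        have h2 : ∑ i ∈ univ.erase j, n i + n j = ∑ i, n i :=
          Finset.sum_erase_add univ n (mem_univ j)
        have hj1 : 1 ≤ n j := Nat.one_le_iff_ne_zero.mpr hj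
        omega
      have hres := ih (S - 1) (by omega) (μ + Pi.single j 1) n' hμ' hsupp' hsum'
      have heq : ((μ + Pi.single j 1) + fun i => ((n' i : ℕ) : ℝ)) = μ + fun i => ((n i : ℕ) : ℝ) := by
        funext i
        by_cases h : i = j
        · subst h
          have hj1 : 1 ≤ n i := Nat.one_le_iff_ne_zero.mpr hj
          simp only [hn', Pi.add_apply, Function.update_self, Pi.single_eq_same]
          push_cast [Nat.cast_sub hj1]
          ring
        · have hsingle : (Pi.single j 1 : Fin N → ℝ) i = 0 := by rw [Pi.single_apply]; simp [h]
          simp only [hn', Pi.add_apply, Function.update_apply, if_neg h, hsingle]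
          ring
      rwa [heq] at hres


/-- The support of a lex-maximal representation has at most `d+1` elements. -/
lemma card_supp_le {μ : Fin N → ℝ} (hμ : IsLM v μ) :
    (univ.filter fun i => μ i ≠ 0).card ≤ d + 1 := by
  classical
  set T := univ.filter fun i => μ i ≠ 0 with hT
  set fam : ↥T → (Fin (d+1) → ℝ) := fun i => Fin.snoc (fun c => (v i c : ℝ)) 1 with hfam
  have hli : LinearIndependent ℝ fam := by
    by_contra hcon
    obtain ⟨g, hgsum, i₀', hg₀⟩ := Fintype.not_linearIndependent_iff.1 hcon
    set c : Fin N → ℝ := fun i => if h : i ∈ T then g ⟨i, h⟩ else 0 with hc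
    have hcoff : ∀ i, i ∉ T → c i = 0 := fun i hi => by simp [hc, hi]
    have hcsub : ∀ i : ↥T, c ↑i = g i := fun i => by simp [hc, i.2]
    -- sum of c is 0
    have hsum0 : ∑ i, c i = 0 := by
      have h1 : ∑ i, c i = ∑ i ∈ T, c i :=
        (Finset.sum_subset (subset_univ T) (fun i _ hi => hcoff i hi)).symm
      have h2 : ∑ i ∈ T, c i = ∑ i : ↥T, c ↑i := (Finset.sum_coe_sort T c).symm
      have h3 : ∑ i : ↥T, c ↑i = ∑ i : ↥T, g i := Finset.sum_congr rfl fun i _ => hcsub i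
      have h4 : ∑ i : ↥T, g i = 0 := by
        have := congrFun hgsum (Fin.last d)
        simpa [hfam, Fin.snoc_last] using this
      rw [h1, h2, h3, h4]
    -- weighted sums vanish
    have hpt0 : ∀ cc : Fin d, ∑ i, c i * (v i cc : ℝ) = 0 := by
      intro cc
      have h1 : ∑ i, c i * (v i cc : ℝ) = ∑ i ∈ T, c i * (v i cc : ℝ) :=
        (Finset.sum_subset (subset_univ T) (fun i _ hi => by rw [hcoff i hi, zero_mul])).symm
      have h2 : ∑ i ∈ T, c i * (v i cc : ℝ) = ∑ i : ↥T, c ↑i * (v ↑i cc : ℝ) :=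
        (Finset.sum_coe_sort T _).symm
      have h3 : ∑ i : ↥T, c ↑i * (v ↑i cc : ℝ) = ∑ i : ↥T, g i * (v ↑i cc : ℝ) :=
        Finset.sum_congr rfl fun i _ => by rw [hcsub i]
      have h4 : ∑ i : ↥T, g i * (v ↑i cc : ℝ) = 0 := by
        have := congrFun hgsum (Fin.castSucc cc)
        simpa [hfam, Fin.snoc_castSucc] using this
      rw [h1, h2, h3, h4]
    -- c is not identically zero
    have hDne : (univ.filter fun i => c i ≠ 0).Nonempty := by
      refine ⟨↑i₀', ?_⟩
      simp only [mem_filter, mem_univ, true_and]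
      rw [hcsub i₀']
      exact hg₀
    set D := univ.filter fun i => c i ≠ 0 with hD
    set i₀ := D.min' hDne with hi₀
    have hi₀D : i₀ ∈ D := D.min'_mem hDne
    have hci₀ : c i₀ ≠ 0 := by have := hi₀D; rw [hD] at this; simpa using this
    set c' : Fin N → ℝ := if 0 < c i₀ then c else -c with hc'
    have hc'i₀ : 0 < c' i₀ := by
      rw [hc']
      by_cases h : 0 < c i₀
      · simpa [h] using h
      · have : c i₀ < 0 := lt_of_le_of_ne (not_lt.mp h) hci₀
        simp [h]
        linarith
    have hc'supp : ∀ i, i ∉ D → c' i = 0 := by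
      intro i hi
      have : c i = 0 := by
        by_contra hcon2
        exact hi (by rw [hD]; simp [hcon2])
      rw [hc']
      by_cases h : 0 < c i₀ <;> simp [h, this]
    have hc'sum : ∑ i, c' i = 0 := by
      rw [hc']
      by_cases h : 0 < c i₀ <;> simp [h, hsum0, Finset.sum_neg_distrib]
    have hc'pt : ∀ cc : Fin d, ∑ i, c' i * (v i cc : ℝ) = 0 := by
      intro cc
      rw [hc']
      by_cases h : 0 < c i₀
      · simpa [h] using hpt0 cc
      · simp only [if_neg h]
        have : ∑ i, (-c) i * (v i cc : ℝ) = -∑ i, c i * (v i cc : ℝ) := by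
          rw [← Finset.sum_neg_distrib]
          exact Finset.sum_congr rfl fun i _ => by rw [Pi.neg_apply, neg_mul]
        rw [this, hpt0 cc, neg_zero]
    -- D is inside the support of μ
    have hDsuppμ : ∀ i, i ∈ D → 0 < μ i := by
      intro i hi
      have hci : c i ≠ 0 := by rw [hD] at hi; simpa using hi
      have hiT : i ∈ T := by
        by_contra hcon2
        exact hci (hcoff i hcon2)
      have : μ i ≠ 0 := by rw [hT] at hiT; simpa using hiT
      exact lt_of_le_of_ne (hμ.1 i) (Ne.symm this)
    -- the epsilon
    have hDim : (D.image fun i => μ i / |c' i|).Nonempty := hDne.image _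
    set ε := (D.image fun i => μ i / |c' i|).min' hDim with hε
    have hεpos : 0 < ε := by
      rw [hε]
      apply lt_of_lt_of_le ?_ (le_refl _)
      have : ∀ y ∈ D.image fun i => μ i / |c' i|, 0 < y := by
        intro y hy
        obtain ⟨i, hiD, rfl⟩ := Finset.mem_image.mp hy
        have h1 : 0 < μ i := hDsuppμ i hiD
        have h2 : c' i ≠ 0 := by
          rw [hc']
          have hci : c i ≠ 0 := by rw [hD] at hiD; simpa using hiD
          by_cases h : 0 < c i₀ <;> simp [h, hci]
        exact div_pos h1 (abs_pos.mpr h2)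
      exact this _ ((D.image fun i => μ i / |c' i|).min'_mem hDim)
    have hεle : ∀ i ∈ D, ε ≤ μ i / |c' i| := by
      intro i hi
      exact Finset.min'_le _ _ (Finset.mem_image_of_mem _ hi)
    set ν : Fin N → ℝ := μ + ε • c' with hν
    have hνnn : ∀ i, 0 ≤ ν i := by
      intro i
      by_cases hi : i ∈ D
      · have h1 : 0 < μ i := hDsuppμ i hi
        have h2 : c' i ≠ 0 := by
          rw [hc']
          have hci : c i ≠ 0 := by rw [hD] at hi; simpa using hi
          by_cases h : 0 < c i₀ <;> simp [h, hci]
        have h3 : ε ≤ μ i / |c' i| := hεle i hi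
        have h4 : 0 < |c' i| := abs_pos.mpr h2
        have h5 : ε * |c' i| ≤ μ i := by
          rw [div_eq_mul_inv] at h3
          calc ε * |c' i| ≤ (μ i * |c' i|⁻¹) * |c' i| := by
                apply mul_le_mul_of_nonneg_right h3 (le_of_lt h4)
          _ = μ i := by field_simp
        have h6 : -(ε * c' i) ≤ ε * |c' i| := by
          rw [← mul_neg]
          apply mul_le_mul_of_nonneg_left _ (le_of_lt hεpos)
          exact (neg_le_abs _)
        simp only [hν, Pi.add_apply, Pi.smul_apply, smul_eq_mul]
        linarith
      · simp only [hν, Pi.add_apply, Pi.smul_apply, smul_eq_mul, hc'supp i hi, mul_zero, add_zero]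
        exact hμ.1 i
    have hlex : LexLE ν μ := by
      apply hμ.2
      · exact hνnn
      · simp only [hν]
        unfold ht
        simp only [Pi.add_apply]
        rw [Finset.sum_add_distrib]
        have : ∑ i, (ε • c') i = ε * ∑ i, c' i := by
          rw [Finset.mul_sum]; exact Finset.sum_congr rfl fun i _ => by simp
        rw [this, hc'sum, mul_zero, add_zero]
      · funext cc
        simp only [hν]
        unfold pt
        have : ∑ i, (μ + ε • c') i * (v i cc : ℝ)
            = ∑ i, μ i * (v i cc : ℝ) + ε * ∑ i, c' i * (v i cc : ℝ) := by
          rw [Finset.mul_sum, ← Finset.sum_add_distrib]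
          exact Finset.sum_congr rfl fun i _ => by
            rw [Pi.add_apply, Pi.smul_apply, smul_eq_mul]; ring
        rw [this, hc'pt cc, mul_zero, add_zero]
    -- contradiction with strict increase at i₀
    have hbefore : ∀ j : Fin N, j < i₀ → ν j = μ j := by
      intro j hj
      have hjD : j ∉ D := fun hmem => absurd (D.min'_le j hmem) (not_le.mpr hj)
      simp [hν, hc'supp j hjD]
    have hstrict : μ i₀ < ν i₀ := by
      simp only [hν, Pi.add_apply, Pi.smul_apply, smul_eq_mul]
      nlinarith
    rcases hlex with heq | ⟨i, hib, hilt⟩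
    · rw [heq] at hstrict; exact absurd hstrict (lt_irrefl _)
    · rcases lt_trichotomy i i₀ with h | h | h
      · exact absurd (hbefore i h) (ne_of_lt (by linarith [hilt]))
      · subst h; linarith
      · have := hib i₀ h; linarith
  have hcard := LinearIndependent.fintype_card_le_finrank hli
  rw [Fintype.card_coe] at hcard
  simpa [Module.finrank_pi] using hcard



section Counting

open scoped Classical

variable {N d : ℕ} (v : Fin N → Fin d → ℤ)

/-- `μ` is a nonnegative representation of the lattice point `x` with total weight `t`. -/
def Rep (x : Fin d → ℤ) (t : ℕ) (μ : Fin N → ℝ) : Prop :=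
  (∀ i, 0 ≤ μ i) ∧ ht μ = (t : ℝ) ∧ pt v μ = fun c => (x c : ℝ)

/-- `(b, j)` is a box element. -/
def IsBox (b : Fin d → ℤ) (j : ℕ) : Prop :=
  1 ≤ j ∧ ∃ β, IsLM v β ∧ (∀ i, β i ≤ 1) ∧ ht β = (j : ℝ) ∧ pt v β = fun c => (b c : ℝ)

noncomputable def beta (b : Fin d → ℤ) (j : ℕ) : Fin N → ℝ :=
  if h : IsBox v b j then h.2.choose else 0

lemma beta_spec {b : Fin d → ℤ} {j : ℕ} (h : IsBox v b j) :
    IsLM v (beta v b j) ∧ (∀ i, beta v b j i ≤ 1) ∧ ht (beta v b j) = (j : ℝ) ∧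
      pt v (beta v b j) = fun c => (b c : ℝ) := by
  rw [beta, dif_pos h]
  exact h.2.choose_spec

lemma beta_unique {b : Fin d → ℤ} {j : ℕ} (h : IsBox v b j) {β : Fin N → ℝ}
    (hβ : IsLM v β) (hht : ht β = (j : ℝ)) (hpt : pt v β = fun c => (b c : ℝ)) :
    beta v b j = β := by
  obtain ⟨h1, _, h3, h4⟩ := beta_spec v h
  exact isLM_unique v h1 hβ (by rw [h3, hht]) (by rw [h4, hpt])

/-- Support of the box representative. -/
noncomputable def Tset (b : Fin d → ℤ) (j : ℕ) : Finset (Fin N) :=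
  univ.filter fun i => beta v b j i ≠ 0

lemma sum_eq_sum_supp (β : Fin N → ℝ) :
    ∑ i, β i = ∑ i ∈ univ.filter (fun i => β i ≠ 0), β i := by
  symm
  apply Finset.sum_subset (Finset.filter_subset _ _)
  intro i _ hi
  by_contra hcon
  exact hi (mem_filter.mpr ⟨mem_univ i, hcon⟩)

lemma isBox_facts {b : Fin d → ℤ} {j : ℕ} (h : IsBox v b j) :
    1 ≤ (Tset v b j).card ∧ j ≤ (Tset v b j).card ∧ (Tset v b j).card ≤ d + 1 := by
  obtain ⟨hLM, hle1, hht, _⟩ := beta_spec v h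
  have hnn := hLM.1
  have hcard : ((j : ℝ)) ≤ (Tset v b j).card := by
    rw [← hht]
    unfold ht
    rw [sum_eq_sum_supp (beta v b j)]
    calc ∑ i ∈ univ.filter (fun i => beta v b j i ≠ 0), beta v b j i
        ≤ ∑ _i ∈ univ.filter (fun i => beta v b j i ≠ 0), (1 : ℝ) :=
          Finset.sum_le_sum fun i _ => hle1 i
      _ = (Tset v b j).card := by simp [Tset]
  have hj : j ≤ (Tset v b j).card := by exact_mod_cast hcard
  refine ⟨le_trans h.1 hj, hj, ?_⟩
  exact card_supp_le v hLM

/-- Bound on coordinates of box points. -/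
lemma isBox_coord_bound {b : Fin d → ℤ} {j : ℕ} (h : IsBox v b j) (c : Fin d) :
    |b c| ≤ ∑ i, |v i c| := by
  obtain ⟨hLM, hle1, _, hpt⟩ := beta_spec v h
  have h1 : (b c : ℝ) = ∑ i, beta v b j i * (v i c : ℝ) := by
    have := congrFun hpt c
    rw [← this]; rfl
  have h2 : |(b c : ℝ)| ≤ ∑ i, |(v i c : ℝ)| := by
    rw [h1]
    calc |∑ i, beta v b j i * (v i c : ℝ)| ≤ ∑ i, |beta v b j i * (v i c : ℝ)| :=
        Finset.abs_sum_le_sum_abs _ _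
      _ ≤ ∑ i, |(v i c : ℝ)| := by
        apply Finset.sum_le_sum
        intro i _
        rw [abs_mul]
        have hb0 : 0 ≤ beta v b j i := hLM.1 i
        have hb1 : beta v b j i ≤ 1 := hle1 i
        calc |beta v b j i| * |(v i c : ℝ)| ≤ 1 * |(v i c : ℝ)| := by
              apply mul_le_mul_of_nonneg_right _ (abs_nonneg _)
              rw [abs_of_nonneg hb0]; exact hb1
          _ = |(v i c : ℝ)| := one_mul _
  have h3 : ((∑ i, |v i c| : ℤ) : ℝ) = ∑ i, |(v i c : ℝ)| := by
    push_cast; rfl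
  have h4 : ((|b c| : ℤ) : ℝ) ≤ ((∑ i, |v i c| : ℤ) : ℝ) := by
    rw [h3]
    rw [show ((|b c| : ℤ) : ℝ) = |(b c : ℝ)| by push_cast; rfl]
    exact h2
  exact_mod_cast h4

/-- The finite set of box elements. -/
noncomputable def boxFinset : Finset ((Fin d → ℤ) × ℕ) :=
  ((Fintype.piFinset fun c : Fin d => Finset.Icc (-(∑ i, |v i c|)) (∑ i, |v i c|)) ×ˢ
    Finset.range (d + 2)).filter fun bj => IsBox v bj.1 bj.2

lemma mem_boxFinset {bj : (Fin d → ℤ) × ℕ} : bj ∈ boxFinset v ↔ IsBox v bj.1 bj.2 := by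
  constructor
  · intro h
    exact (Finset.mem_filter.mp h).2
  · intro h
    refine Finset.mem_filter.mpr ⟨?_, h⟩
    refine Finset.mem_product.mpr ⟨?_, ?_⟩
    · rw [Fintype.mem_piFinset]
      intro c
      rw [Finset.mem_Icc]
      have := isBox_coord_bound v h c
      constructor <;> [linarith [neg_abs_le (bj.1 c)]; linarith [le_abs_self (bj.1 c)]]
    · rw [Finset.mem_range]
      have := (isBox_facts v h).2.1
      have := (isBox_facts v h).2.2
      omega

/-- The sigma finset indexing lattice points. -/
noncomputable def sig (t : ℕ) : Finset ((Σ _ : (Fin d → ℤ) × ℕ, (Fin N → ℕ))) :=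
  (boxFinset v).sigma fun bj => Finset.piAntidiag (Tset v bj.1 bj.2) (t - bj.2)

/-- Reconstructing the lattice point from the decomposition data. -/
def fwd (z : Σ _ : (Fin d → ℤ) × ℕ, (Fin N → ℕ)) : Fin d → ℤ :=
  fun c => z.1.1 c + ∑ i, (z.2 i : ℤ) * v i c

lemma sig_spec {t : ℕ} (htd : d + 1 ≤ t) {z : Σ _ : (Fin d → ℤ) × ℕ, (Fin N → ℕ)}
    (hz : z ∈ sig v t) :
    IsLM v (beta v z.1.1 z.1.2 + fun i => (z.2 i : ℝ)) ∧
      Rep v (fwd v z) t (beta v z.1.1 z.1.2 + fun i => (z.2 i : ℝ)) := by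
  obtain ⟨hbox, hn⟩ := Finset.mem_sigma.mp hz
  rw [mem_boxFinset] at hbox
  obtain ⟨hLM, hle1, hht, hpt⟩ := beta_spec v hbox
  rw [Finset.mem_piAntidiag] at hn
  obtain ⟨hsum, hsupp⟩ := hn
  set b := z.1.1
  set j := z.1.2
  set n := z.2
  have hnsupp : ∀ i, n i ≠ 0 → 0 < beta v b j i := by
    intro i hi
    have hiT : i ∈ Tset v b j := hsupp i hi
    have : beta v b j i ≠ 0 := by
      rw [Tset, mem_filter] at hiT
      exact hiT.2
    exact lt_of_le_of_ne (hLM.1 i) (Ne.symm this)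
  have hjle : j ≤ t := le_trans (le_trans (isBox_facts v hbox).2.1 (isBox_facts v hbox).2.2) htd
  have hsum_univ : ∑ i, n i = t - j := by
    rw [← hsum]
    symm
    apply Finset.sum_subset (Finset.subset_univ _)
    intro i _ hi
    by_contra hcon
    exact hi (hsupp i hcon)
  have hIsLM : IsLM v (beta v b j + fun i => (n i : ℝ)) := isLM_add_nat v hLM n hnsupp
  refine ⟨hIsLM, hIsLM.1, ?_, ?_⟩
  · rw [ht_add, hht]
    have : ht (fun i => (n i : ℝ)) = ((∑ i, n i : ℕ) : ℝ) := by
      unfold ht; push_cast; rfl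
    rw [this, hsum_univ]
    rw [← Nat.cast_add]
    congr 1
    omega
  · rw [pt_add, hpt]
    funext c
    simp only [Pi.add_apply]
    unfold pt fwd
    push_cast
    rfl

/-- Recovering the natural parts. -/
lemma npart_recover {t : ℕ} {z : Σ _ : (Fin d → ℤ) × ℕ, (Fin N → ℕ)}
    (hz : z ∈ sig v t) (i : Fin N) :
    (⌈(beta v z.1.1 z.1.2 + fun i' => (z.2 i' : ℝ)) i⌉ - 1).toNat = z.2 i := by
  obtain ⟨hbox, hn⟩ := Finset.mem_sigma.mp hz
  rw [mem_boxFinset] at hbox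
  obtain ⟨hLM, hle1, _, _⟩ := beta_spec v hbox
  rw [Finset.mem_piAntidiag] at hn
  simp only [Pi.add_apply]
  by_cases hβ : beta v z.1.1 z.1.2 i = 0
  · have hni : z.2 i = 0 := by
      by_contra hcon
      have := hn.2 i hcon
      rw [Tset, mem_filter] at this
      exact this.2 hβ
    rw [hβ, hni]
    norm_num
  · have h0 : 0 < beta v z.1.1 z.1.2 i := lt_of_le_of_ne (hLM.1 i) (Ne.symm hβ)
    have h1 : beta v z.1.1 z.1.2 i ≤ 1 := hle1 i
    have hceil : ⌈beta v z.1.1 z.1.2 i + (z.2 i : ℝ)⌉ = ⌈beta v z.1.1 z.1.2 i⌉ + z.2 i :=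
      Int.ceil_add_natCast _ _
    have hceil1 : ⌈beta v z.1.1 z.1.2 i⌉ = 1 := by
      apply le_antisymm
      · exact Int.ceil_le.mpr (by exact_mod_cast h1)
      · exact Int.ceil_pos.mpr h0
    rw [hceil, hceil1]
    omega

/-- Forward direction: every represented lattice point arises from the sigma finset. -/
lemma exists_data {x : Fin d → ℤ} {t : ℕ} (ht1 : 1 ≤ t)
    (hx : ∃ μ0, Rep v x t μ0) : ∃ z ∈ sig v t, fwd v z = x := by
  obtain ⟨μ0, hμ0⟩ := hx
  obtain ⟨μ, hLM, hhtμ, hptμ⟩ := exists_isLM v μ0 hμ0.1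
  rw [hμ0.2.1] at hhtμ
  rw [hμ0.2.2] at hptμ
  set n : Fin N → ℕ := fun i => (⌈μ i⌉ - 1).toNat with hn
  set β : Fin N → ℝ := fun i => μ i - (n i : ℝ) with hβ
  -- pointwise facts
  have hfacts : ∀ i, 0 ≤ β i ∧ β i ≤ μ i ∧ β i ≤ 1 ∧ (β i ≠ 0 ↔ μ i ≠ 0) := by
    intro i
    by_cases h : μ i = 0
    · have : n i = 0 := by simp [hn, h]
      constructor
      · simp [hβ, this, h]
      constructor
      · simp [hβ, this, h]
      constructor
      · simp [hβ, this, h]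
      · simp [hβ, this, h]
    · have hpos : 0 < μ i := lt_of_le_of_ne (hLM.1 i) (Ne.symm h)
      have hceilpos : 1 ≤ ⌈μ i⌉ := Int.ceil_pos.mpr hpos
      have hcast : ((n i : ℕ) : ℝ) = (⌈μ i⌉ : ℝ) - 1 := by
        show (((⌈μ i⌉ - 1).toNat : ℤ) : ℝ) = (⌈μ i⌉ : ℝ) - 1
        rw [Int.toNat_of_nonneg (by omega)]
        push_cast
        ring
      have hc1 : μ i ≤ (⌈μ i⌉ : ℝ) := Int.le_ceil _
      have hc2 : (⌈μ i⌉ : ℝ) < μ i + 1 := Int.ceil_lt_add_one _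
      have hβval : β i = μ i - ((⌈μ i⌉ : ℝ) - 1) := by
        have h' : β i = μ i - (n i : ℝ) := rfl
        rw [h', hcast]
      constructor
      · rw [hβval]; linarith
      constructor
      · rw [hβval]; linarith
      constructor
      · rw [hβval]; linarith
      · constructor
        · intro _; exact h
        · intro _; rw [hβval]; intro hcon; linarith [hc2, hcon]
  have hβLM : IsLM v β := isLM_of_le v hLM (fun i => (hfacts i).1) (fun i => (hfacts i).2.1)
  -- sums
  have hsumle : ∑ i, n i ≤ t := by
    have hreal : ((∑ i, n i : ℕ) : ℝ) ≤ (t : ℝ) := by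
      push_cast
      rw [← hhtμ]
      unfold ht
      apply Finset.sum_le_sum
      intro i _
      have := (hfacts i).1
      rw [hβ] at this
      simp at this
      linarith
    exact_mod_cast hreal
  set j : ℕ := t - ∑ i, n i with hj
  have hhtβ : ht β = (j : ℝ) := by
    unfold ht
    rw [hβ]
    rw [Finset.sum_sub_distrib]
    have h1 : ∑ i, μ i = (t:ℝ) := hhtμ
    have h2 : ∑ i, ((n i : ℕ) : ℝ) = ((∑ i, n i : ℕ) : ℝ) := by push_cast; rfl
    rw [h1, h2, hj]
    rw [Nat.cast_sub hsumle]
  have hj1 : 1 ≤ j := by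
    -- ht β > 0
    have hμpos : ∃ i, 0 < μ i := by
      by_contra hcon
      push_neg at hcon
      have : ∀ i, μ i = 0 := fun i => le_antisymm (hcon i) (hLM.1 i)
      have : ht μ = 0 := by unfold ht; exact Finset.sum_eq_zero fun i _ => this i
      rw [hhtμ] at this
      have : (t : ℝ) = 0 := this
      have : t = 0 := by exact_mod_cast this
      omega
    obtain ⟨i0, hi0⟩ := hμpos
    have hβi0 : 0 < β i0 := by
      have := (hfacts i0).2.2.2
      have hne : β i0 ≠ 0 := this.mpr (ne_of_gt hi0)
      exact lt_of_le_of_ne (hfacts i0).1 (Ne.symm hne)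
    have : (0:ℝ) < ht β := by
      unfold ht
      have : β i0 ≤ ∑ i, β i := Finset.single_le_sum (fun i _ => (hfacts i).1) (mem_univ i0)
      linarith
    rw [hhtβ] at this
    have : j ≠ 0 := by
      intro hcon
      rw [hcon] at this
      simp at this
    omega
  set b : Fin d → ℤ := fun c => x c - ∑ i, (n i : ℤ) * v i c with hb
  have hptβ : pt v β = fun c => (b c : ℝ) := by
    funext c
    unfold pt
    rw [hβ]
    simp only
    rw [show ∑ i, (μ i - ((n i : ℕ):ℝ)) * (v i c : ℝ)
        = ∑ i, μ i * (v i c : ℝ) - ∑ i, ((n i : ℕ):ℝ) * (v i c : ℝ) by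
      rw [← Finset.sum_sub_distrib]; exact Finset.sum_congr rfl fun i _ => by ring]
    have h1 : ∑ i, μ i * (v i c : ℝ) = (x c : ℝ) := by
      have := congrFun hptμ c
      exact this
    rw [h1, hb]
    push_cast
    rfl
  have hbox : IsBox v b j := ⟨hj1, β, hβLM, fun i => (hfacts i).2.2.1, hhtβ, hptβ⟩
  have hβeq : beta v b j = β := beta_unique v hbox hβLM hhtβ hptβ
  have hnmem : (⟨(b, j), n⟩ : Σ _ : (Fin d → ℤ) × ℕ, (Fin N → ℕ)) ∈ sig v t := by
    rw [sig, Finset.mem_sigma]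
    constructor
    · exact (mem_boxFinset v).mpr hbox
    · rw [Finset.mem_piAntidiag]
      constructor
      · have : ∑ i ∈ Tset v b j, n i = ∑ i, n i := by
          apply Finset.sum_subset (Finset.subset_univ _)
          intro i _ hi
          by_contra hcon
          apply hi
          rw [Tset, mem_filter, hβeq]
          refine ⟨mem_univ i, ?_⟩
          have hμi : μ i ≠ 0 := by
            intro h0
            have : n i = 0 := by simp [hn, h0]
            exact hcon this
          exact ((hfacts i).2.2.2).mpr hμi
        rw [this]
        show ∑ i, n i = t - j
        omega
      · intro i hi
        rw [Tset, mem_filter, hβeq]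
        refine ⟨mem_univ i, ?_⟩
        have hμi : μ i ≠ 0 := by
          intro h0
          have : n i = 0 := by simp [hn, h0]
          exact hi this
        exact ((hfacts i).2.2.2).mpr hμi
  refine ⟨⟨(b, j), n⟩, hnmem, ?_⟩
  funext c
  show b c + ∑ i, (n i : ℤ) * v i c = x c
  rw [hb]
  ring

/-- Injectivity of the reconstruction map on the sigma finset. -/
lemma inj_data {t : ℕ} (htd : d + 1 ≤ t) :
    ∀ z1 ∈ sig v t, ∀ z2 ∈ sig v t, fwd v z1 = fwd v z2 → z1 = z2 := by
  intro z1 hz1 z2 hz2 heq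
  obtain ⟨hLM1, hRep1⟩ := sig_spec v htd hz1
  obtain ⟨hLM2, hRep2⟩ := sig_spec v htd hz2
  have hμeq : (beta v z1.1.1 z1.1.2 + fun i => (z1.2 i : ℝ))
      = (beta v z2.1.1 z2.1.2 + fun i => (z2.2 i : ℝ)) := by
    apply isLM_unique v hLM1 hLM2
    · rw [hRep1.2.1, hRep2.2.1]
    · rw [hRep1.2.2, hRep2.2.2, heq]
  have hneq : z1.2 = z2.2 := by
    funext i
    rw [← npart_recover v hz1 i, ← npart_recover v hz2 i, hμeq]
  -- recover j
  have hjeq : z1.1.2 = z2.1.2 := by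
    obtain ⟨hbox1, _⟩ := Finset.mem_sigma.mp hz1
    obtain ⟨hbox2, _⟩ := Finset.mem_sigma.mp hz2
    rw [mem_boxFinset] at hbox1 hbox2
    have h1 := (beta_spec v hbox1).2.2.1
    have h2 := (beta_spec v hbox2).2.2.1
    have hβeq : beta v z1.1.1 z1.1.2 = beta v z2.1.1 z2.1.2 := by
      funext i
      have := congrFun hμeq i
      simp only [Pi.add_apply] at this
      have hn := congrFun hneq i
      rw [hn] at this
      linarith
    have : ((z1.1.2 : ℕ) : ℝ) = ((z2.1.2 : ℕ) : ℝ) := by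
      rw [← h1, ← h2, hβeq]
    exact_mod_cast this
  -- recover b
  have hbeq : z1.1.1 = z2.1.1 := by
    funext c
    have := congrFun heq c
    rw [fwd, fwd] at this
    have hn := hneq
    have : z1.1.1 c + ∑ i, (z1.2 i : ℤ) * v i c = z2.1.1 c + ∑ i, (z2.2 i : ℤ) * v i c := this
    rw [hn] at this
    omega
  -- assemble
  obtain ⟨⟨b1, j1⟩, n1⟩ := z1
  obtain ⟨⟨b2, j2⟩, n2⟩ := z2
  simp only at hbeq hjeq hneq
  subst hbeq; subst hjeq; subst hneq
  rfl

/-- The master counting formula. -/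
theorem main_count (t : ℕ) (ht1 : 1 ≤ t) (htd : d + 1 ≤ t) :
    {x : Fin d → ℤ | ∃ μ, Rep v x t μ}.ncard
      = ∑ bj ∈ boxFinset v, (Finset.piAntidiag (Tset v bj.1 bj.2) (t - bj.2)).card := by
  have hset : {x : Fin d → ℤ | ∃ μ, Rep v x t μ} = ↑((sig v t).image (fwd v)) := by
    ext x
    simp only [Set.mem_setOf_eq, Finset.coe_image, Set.mem_image, Finset.mem_coe]
    constructor
    · intro hx
      obtain ⟨z, hz, hfz⟩ := exists_data v ht1 hx
      exact ⟨z, hz, hfz⟩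
    · rintro ⟨z, hz, rfl⟩
      obtain ⟨_, hRep⟩ := sig_spec v htd hz
      exact ⟨_, hRep⟩
  rw [hset, Set.ncard_coe_finset]
  rw [Finset.card_image_of_injOn (fun z1 hz1 z2 hz2 h => inj_data v htd z1 hz1 z2 hz2 h)]
  rw [sig, Finset.card_sigma]

end Counting




section Cells

open scoped Classical

variable {N d : ℕ} (v : Fin N → Fin d → ℤ)

/-- Indicator weight vector of a subset. -/
def chi (T : Finset (Fin N)) : Fin N → ℝ := fun i => if i ∈ T then 1 else 0

lemma chi_nonneg (T : Finset (Fin N)) (i : Fin N) : 0 ≤ chi T i := by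
  unfold chi; split <;> norm_num

lemma chi_le_one (T : Finset (Fin N)) (i : Fin N) : chi T i ≤ 1 := by
  unfold chi; split <;> norm_num

lemma ht_chi (T : Finset (Fin N)) : ht (chi T) = (T.card : ℝ) := by
  unfold ht chi
  rw [Finset.sum_ite_mem]
  simp

lemma pt_chi (T : Finset (Fin N)) :
    pt v (chi T) = fun c => ((∑ i ∈ T, v i c : ℤ) : ℝ) := by
  funext c
  unfold pt chi
  push_cast
  rw [← Finset.sum_filter_add_sum_filter_not univ (fun i => i ∈ T)]
  have h1 : ∑ i ∈ univ.filter (fun i => i ∈ T), (if i ∈ T then (1:ℝ) else 0) * (v i c : ℝ)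
      = ∑ i ∈ T, (v i c : ℝ) := by
    rw [Finset.filter_mem_eq_inter, Finset.univ_inter]
    exact Finset.sum_congr rfl fun i hi => by rw [if_pos hi, one_mul]
  have h2 : ∑ i ∈ univ.filter (fun i => i ∉ T), (if i ∈ T then (1:ℝ) else 0) * (v i c : ℝ)
      = 0 := by
    apply Finset.sum_eq_zero
    intro i hi
    rw [mem_filter] at hi
    rw [if_neg hi.2, zero_mul]
  rw [h1, h2, add_zero]

def IsCell (T : Finset (Fin N)) : Prop := IsLM v (chi T)

lemma isCell_empty : IsCell v (∅ : Finset (Fin N)) := by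
  constructor
  · exact chi_nonneg _
  intro ν hν hht _
  have h0 : ht (chi (∅ : Finset (Fin N))) = 0 := by rw [ht_chi]; simp
  rw [h0] at hht
  left
  funext i
  have hle : ν i ≤ 0 := by
    have : ν i ≤ ∑ i', ν i' := Finset.single_le_sum (fun i' _ => hν i') (mem_univ i)
    unfold ht at hht
    linarith
  have hzero : ν i = 0 := le_antisymm hle (hν i)
  rw [hzero]
  show (0:ℝ) = chi ∅ i
  unfold chi
  simp

lemma chi_insert_zero {T : Finset (Fin N)} (iz : Fin N) (h0 : iz ∉ T) :
    chi (insert iz T) = chi T + Pi.single iz 1 := by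
  funext i
  unfold chi
  by_cases h : i = iz
  · subst h
    rw [if_pos (Finset.mem_insert_self _ _)]
    rw [Pi.add_apply, if_neg h0, Pi.single_eq_same]
    norm_num
  · have hsingle : (Pi.single iz 1 : Fin N → ℝ) i = 0 := by
      rw [Pi.single_apply]; simp [h]
    rw [Pi.add_apply, hsingle, add_zero]
    by_cases hiT : i ∈ T
    · rw [if_pos (Finset.mem_insert_of_mem hiT), if_pos hiT]
    · rw [if_neg (by simp [h, hiT]), if_neg hiT]

lemma isCell_insert_zero {T : Finset (Fin N)} (hN : 0 < N) (h0 : (⟨0, hN⟩ : Fin N) ∉ T)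
    (hT : IsCell v T) : IsCell v (insert (⟨0, hN⟩ : Fin N) T) := by
  set iz : Fin N := ⟨0, hN⟩ with hiz
  unfold IsCell
  rw [chi_insert_zero iz h0]
  constructor
  · intro i
    have := chi_nonneg T i
    by_cases h : i = iz
    · subst h; simp only [Pi.add_apply, Pi.single_eq_same]; linarith
    · have hsingle : (Pi.single iz 1 : Fin N → ℝ) i = 0 := by
        rw [Pi.single_apply]; simp [h]
      simp only [Pi.add_apply, hsingle, add_zero]; exact this
  intro ν hν hht hpt
  by_cases hcase : 1 ≤ ν iz
  · have key : LexLE (ν - Pi.single iz 1) (chi T) := by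
      apply hT.2
      · intro i
        by_cases h : i = iz
        · subst h; simp only [Pi.sub_apply, Pi.single_eq_same]; linarith
        · have hsingle : (Pi.single iz 1 : Fin N → ℝ) i = 0 := by
            rw [Pi.single_apply]; simp [h]
          simp only [Pi.sub_apply, hsingle, sub_zero]; exact hν i
      · rw [ht_sub, hht, ht_add, ht_single]; ring
      · rw [pt_sub, hpt, pt_add]; funext c; simp only [Pi.add_apply, Pi.sub_apply]; ring
    have := lexLE_add_right (c := Pi.single iz 1) key
    simpa using this
  · push_neg at hcase
    right
    refine ⟨iz, fun j hj => absurd (show (j : ℕ) < 0 from hj) (Nat.not_lt_zero _), ?_⟩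
    have hval : (chi T + Pi.single iz 1 : Fin N → ℝ) iz = 1 := by
      simp only [Pi.add_apply, Pi.single_eq_same]
      unfold chi
      rw [if_neg h0]
      norm_num
    rw [hval]
    exact hcase

lemma isCell_erase {T : Finset (Fin N)} (iz : Fin N)
    (hT : IsCell v T) : IsCell v (T.erase iz) := by
  apply isLM_of_le v hT (chi_nonneg _)
  intro i
  unfold chi
  by_cases h : i ∈ T.erase iz
  · rw [if_pos h, if_pos (Finset.mem_of_mem_erase h)]
  · rw [if_neg h]
    exact chi_nonneg T i

noncomputable def cellFinset : Finset (Finset (Fin N)) :=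
  univ.filter fun T => IsCell v T

lemma mem_cellFinset {T : Finset (Fin N)} : T ∈ cellFinset v (d := d) ↔ IsCell v T := by
  unfold cellFinset
  simp

lemma sum_cells (hN : 0 < N) :
    ∑ T ∈ cellFinset v (d := d), (-1 : ℤ) ^ T.card = 0 := by
  set iz : Fin N := ⟨0, hN⟩ with hiz
  apply Finset.sum_involution
    (g := fun T _ => if iz ∈ T then T.erase iz else insert iz T)
  · intro T hT
    by_cases h : iz ∈ T
    · rw [if_pos h, Finset.card_erase_of_mem h]
      have hc : 1 ≤ T.card := Finset.card_pos.mpr ⟨iz, h⟩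
      have hpow : (-1 : ℤ) ^ (T.card - 1) * (-1) = (-1) ^ T.card := by
        rw [← pow_succ]
        congr 1
        omega
      linarith [hpow]
    · rw [if_neg h, Finset.card_insert_of_notMem h]
      have hpow : (-1 : ℤ) ^ T.card * (-1) = (-1) ^ (T.card + 1) := by rw [← pow_succ]
      linarith [hpow]
  · intro T _ _
    by_cases h : iz ∈ T
    · rw [if_pos h]
      intro hcon
      have hni : iz ∉ T.erase iz := Finset.notMem_erase _ _
      rw [hcon] at hni
      exact hni h
    · rw [if_neg h]
      intro hcon
      have hmi : iz ∈ insert iz T := Finset.mem_insert_self _ _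
      rw [hcon] at hmi
      exact h hmi
  · intro T hT
    by_cases h : iz ∈ T
    · rw [if_pos h]
      rw [if_neg (Finset.notMem_erase _ _)]
      exact Finset.insert_erase h
    · rw [if_neg h]
      rw [if_pos (Finset.mem_insert_self _ _)]
      exact Finset.erase_insert h
  · intro T hT
    rw [mem_cellFinset] at hT
    by_cases h : iz ∈ T
    · rw [if_pos h]
      rw [mem_cellFinset]
      exact isCell_erase v iz hT
    · rw [if_neg h]
      rw [mem_cellFinset]
      exact isCell_insert_zero v hN h hT

lemma sum_nonempty_cells (hN : 0 < N) :
    ∑ T ∈ (cellFinset v (d := d)).erase ∅, (-1 : ℤ) ^ (T.card - 1) = 1 := by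
  have hmem : (∅ : Finset (Fin N)) ∈ cellFinset v (d := d) := by
    rw [mem_cellFinset]
    exact isCell_empty v
  have hsplit := Finset.add_sum_erase _ (fun T : Finset (Fin N) => (-1 : ℤ) ^ T.card) hmem
  rw [sum_cells v hN] at hsplit
  simp only [Finset.card_empty, pow_zero] at hsplit
  have hsum : ∑ T ∈ (cellFinset v (d := d)).erase ∅, (-1 : ℤ) ^ T.card = -1 := by
    linarith [hsplit]
  have hneg : ∀ T ∈ (cellFinset v (d := d)).erase ∅,
      (-1 : ℤ) ^ (T.card - 1) = -((-1 : ℤ) ^ T.card) := by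
    intro T hT
    have hTne : T ≠ ∅ := (Finset.mem_erase.mp hT).1
    have hc : 1 ≤ T.card := Finset.card_pos.mpr (Finset.nonempty_of_ne_empty hTne)
    have hpow : (-1 : ℤ) ^ (T.card - 1) * (-1) = (-1) ^ T.card := by
      rw [← pow_succ]
      congr 1
      omega
    linarith [hpow]
  rw [Finset.sum_congr rfl hneg, Finset.sum_neg_distrib, hsum]
  ring

lemma beta_eq_chi_of_saturated {bj : (Fin d → ℤ) × ℕ} (hbox : IsBox v bj.1 bj.2)
    (hsat : bj.2 = (Tset v bj.1 bj.2).card) :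
    beta v bj.1 bj.2 = chi (Tset v bj.1 bj.2) := by
  obtain ⟨hLM, hle1, hht, hpt⟩ := beta_spec v hbox
  funext i
  by_cases h : i ∈ Tset v bj.1 bj.2
  · have hall : ∀ i' ∈ Tset v bj.1 bj.2, beta v bj.1 bj.2 i' = 1 := by
      have hsum : ∑ i' ∈ Tset v bj.1 bj.2, (1 - beta v bj.1 bj.2 i') = 0 := by
        rw [Finset.sum_sub_distrib]
        have h1 : ∑ _i' ∈ Tset v bj.1 bj.2, (1:ℝ) = ((Tset v bj.1 bj.2).card : ℝ) := by
          simp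
        have h2 : ∑ i' ∈ Tset v bj.1 bj.2, beta v bj.1 bj.2 i' = ((bj.2 : ℕ) : ℝ) := by
          unfold Tset
          rw [← sum_eq_sum_supp (beta v bj.1 bj.2)]
          exact hht
        rw [h1, h2, ← hsat]
        ring
      intro i' hi'
      have := (Finset.sum_eq_zero_iff_of_nonneg
        (fun i'' _ => by linarith [hle1 i''])).mp hsum i' hi'
      linarith [this]
    rw [hall i h]
    unfold chi
    rw [if_pos h]
  · have hz : beta v bj.1 bj.2 i = 0 := by
      by_contra hcon
      exact h (by rw [Tset, mem_filter]; exact ⟨mem_univ _, hcon⟩)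
    rw [hz]
    unfold chi
    rw [if_neg h]

lemma tset_of_cell {T : Finset (Fin N)} (hcell : IsCell v T) (hcard : 1 ≤ T.card) :
    IsBox v (fun c => ∑ i ∈ T, v i c) T.card ∧
      Tset v (fun c => ∑ i ∈ T, v i c) T.card = T := by
  have hbox : IsBox v (fun c => ∑ i ∈ T, v i c) T.card :=
    ⟨hcard, chi T, hcell, chi_le_one T, ht_chi T, pt_chi v T⟩
  have hbeta : beta v (fun c => ∑ i ∈ T, v i c) T.card = chi T :=
    beta_unique v hbox hcell (ht_chi T) (pt_chi v T)
  refine ⟨hbox, ?_⟩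
  rw [Tset, hbeta]
  ext i
  rw [mem_filter]
  unfold chi
  constructor
  · rintro ⟨_, hne⟩
    by_contra hcon
    rw [if_neg hcon] at hne
    exact hne rfl
  · intro hi
    exact ⟨mem_univ _, by rw [if_pos hi]; norm_num⟩

/-- The sum over saturated box elements equals the sum over nonempty cells. -/
lemma sum_saturated (hN : 0 < N) :
    ∑ bj ∈ (boxFinset v).filter (fun bj => bj.2 = (Tset v bj.1 bj.2).card),
        (-1 : ℤ) ^ ((Tset v bj.1 bj.2).card - 1)
      = ∑ T ∈ (cellFinset v (d := d)).erase ∅, (-1 : ℤ) ^ (T.card - 1) := by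
  apply Finset.sum_nbij' (i := fun bj => Tset v bj.1 bj.2)
    (j := fun T => ((fun c => ∑ i ∈ T, v i c), T.card))
  -- forward maps into
  · intro bj hbj
    rw [Finset.mem_filter] at hbj
    obtain ⟨hboxmem, hsat⟩ := hbj
    rw [mem_boxFinset] at hboxmem
    have hbetachi := beta_eq_chi_of_saturated v hboxmem hsat
    rw [Finset.mem_erase]
    constructor
    · have h1 := (isBox_facts v hboxmem).1
      intro hcon
      rw [hcon] at h1
      simp at h1
    · rw [mem_cellFinset]
      unfold IsCell
      rw [← hbetachi]
      exact (beta_spec v hboxmem).1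
  -- backward maps into
  · intro T hT
    rw [Finset.mem_erase] at hT
    obtain ⟨hTne, hTmem⟩ := hT
    rw [mem_cellFinset] at hTmem
    have hcard : 1 ≤ T.card := Finset.card_pos.mpr (Finset.nonempty_of_ne_empty hTne)
    obtain ⟨hbox, hTset⟩ := tset_of_cell v hTmem hcard
    rw [Finset.mem_filter]
    refine ⟨(mem_boxFinset v).mpr hbox, ?_⟩
    show T.card = (Tset v _ _).card
    rw [hTset]
  -- left inverse
  · intro bj hbj
    rw [Finset.mem_filter] at hbj
    obtain ⟨hboxmem, hsat⟩ := hbj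
    rw [mem_boxFinset] at hboxmem
    obtain ⟨hLM, hle1, hht, hpt⟩ := beta_spec v hboxmem
    have hbetachi := beta_eq_chi_of_saturated v hboxmem hsat
    have hb : bj.1 = fun c => ∑ i ∈ Tset v bj.1 bj.2, v i c := by
      funext c
      have h1 := congrFun hpt c
      rw [hbetachi] at h1
      have h2 := congrFun (pt_chi v (Tset v bj.1 bj.2)) c
      rw [h1] at h2
      exact_mod_cast h2
    have : ((fun c => ∑ i ∈ Tset v bj.1 bj.2, v i c), (Tset v bj.1 bj.2).card)
        = (bj.1, bj.2) := by
      rw [← hb, ← hsat]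
    rw [this]
  -- right inverse
  · intro T hT
    rw [Finset.mem_erase] at hT
    obtain ⟨hTne, hTmem⟩ := hT
    rw [mem_cellFinset] at hTmem
    have hcard : 1 ≤ T.card := Finset.card_pos.mpr (Finset.nonempty_of_ne_empty hTne)
    exact (tset_of_cell v hTmem hcard).2
  -- values agree
  · intro bj hbj
    rfl

end Cells


lemma aux_multichoose_sum (e : ℕ) : ∀ n : ℕ,
    ∑ i ∈ range (n + 1), Nat.multichoose e (n - i) = Nat.multichoose (e + 1) n := by
  intro n
  induction n with
  | zero => simp
  | succ n ih =>
    rw [Finset.sum_range_succ']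
    have h1 : ∀ i ∈ range (n + 1), Nat.multichoose e (n + 1 - (i + 1)) = Nat.multichoose e (n - i) :=
      fun i _ => by congr 1; omega
    rw [Finset.sum_congr rfl h1, ih]
    simp only [Nat.sub_zero]
    have := Nat.multichoose_succ_succ e n
    omega

lemma card_piAntidiag {ι : Type*} [DecidableEq ι] (s : Finset ι) (n : ℕ) :
    (Finset.piAntidiag s n).card = Nat.multichoose s.card n := by
  classical
  induction s using Finset.cons_induction generalizing n with
  | empty =>
    rw [Finset.piAntidiag_empty]
    rcases Nat.eq_zero_or_pos n with h | h
    · subst h; simp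
    · rw [if_neg (by omega)]
      rw [Finset.card_empty]
      obtain ⟨n', rfl⟩ : ∃ n', n = n' + 1 := ⟨n - 1, by omega⟩
      rw [Finset.card_empty, Nat.multichoose_zero_succ]
  | cons a s ha ih =>
    rw [Finset.piAntidiag_cons ha n, Finset.card_disjiUnion]
    simp only [Finset.card_map]
    rw [Finset.sum_congr rfl (fun (p : ℕ × ℕ) _ => ih p.2)]
    rw [Finset.Nat.sum_antidiagonal_eq_sum_range_succ (fun a b => Nat.multichoose s.card b)]
    rw [aux_multichoose_sum]
    rw [Finset.card_cons]

lemma dvd_choose_pp {p : ℕ} (hp : p.Prime) {i D k : ℕ} (hi1 : 1 ≤ i) (hid : i ≤ D)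
    (hk : Nat.log p D < k) : p ^ (k - Nat.log p D) ∣ Nat.choose (p ^ k) i := by
  set l := Nat.log p D with hl
  set a := i.factorization p with ha
  have hine : i ≠ 0 := by omega
  have hpa : p ^ a ≤ i := Nat.ordProj_le p hine
  have hD1 : 1 ≤ D := le_trans hi1 hid
  have hDlt : D < p ^ (l + 1) := Nat.lt_pow_succ_log_self hp.one_lt D
  have hal : a ≤ l := by
    by_contra hcon
    push_neg at hcon
    have : p ^ (l + 1) ≤ p ^ a := Nat.pow_le_pow_right hp.pos hcon
    omega
  -- key identity
  have hiden : p ^ k * Nat.choose (p ^ k - 1) (i - 1) = Nat.choose (p ^ k) i * i := by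
    have hpk : 0 < p ^ k := pow_pos hp.pos k
    have := Nat.add_one_mul_choose_eq (p ^ k - 1) (i - 1)
    have e1 : p ^ k - 1 + 1 = p ^ k := by omega
    have e2 : i - 1 + 1 = i := by omega
    rw [e1, e2] at this
    exact this
  have hdvd : p ^ k ∣ Nat.choose (p ^ k) i * i := Dvd.intro _ hiden
  set m := i / p ^ a with hm
  have hima : i = p ^ a * m := (Nat.ordProj_mul_ordCompl_eq_self i p).symm
  have hcop : Nat.Coprime p m := hp.coprime_iff_not_dvd.mpr (Nat.not_dvd_ordCompl hp hine)
  have hdvd2 : p ^ (k - a) ∣ Nat.choose (p ^ k) i * m := by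
    have h1 : p ^ (k - a) * p ^ a ∣ (Nat.choose (p ^ k) i * m) * p ^ a := by
      rw [← pow_add, Nat.sub_add_cancel (le_trans hal (le_of_lt hk))]
      have : Nat.choose (p ^ k) i * m * p ^ a = Nat.choose (p ^ k) i * i := by
        rw [hima]; ring
      rw [this]
      exact hdvd
    exact (Nat.mul_dvd_mul_iff_right (pow_pos hp.pos a)).mp h1
  have hcop2 : Nat.Coprime (p ^ (k - a)) m := Nat.Coprime.pow_left _ hcop
  have hdvd3 : p ^ (k - a) ∣ Nat.choose (p ^ k) i := (Nat.Coprime.dvd_of_dvd_mul_right hcop2) hdvd2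
  exact dvd_trans (pow_dvd_pow p (by omega)) hdvd3

lemma choose_pred_modeq {p : ℕ} (hp : p.Prime) {D k : ℕ} (hk : Nat.log p D < k) :
    ∀ r : ℕ, r ≤ D →
      (Nat.choose (p ^ k - 1) r : ℤ) ≡ (-1) ^ r [ZMOD (p ^ (k - Nat.log p D) : ℕ)] := by
  intro r
  induction r with
  | zero => intro _; simp [Int.ModEq.refl]
  | succ r ih =>
    intro hr
    have hih := ih (by omega)
    have hpk : 0 < p ^ k := pow_pos hp.pos k
    have hpascal : Nat.choose (p ^ k) (r + 1)
        = Nat.choose (p ^ k - 1) r + Nat.choose (p ^ k - 1) (r + 1) := by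
      have := Nat.choose_succ_succ' (p ^ k - 1) r
      have e1 : p ^ k - 1 + 1 = p ^ k := by omega
      rw [e1] at this
      linarith [this]
    have hdvd : ((p ^ (k - Nat.log p D) : ℕ) : ℤ) ∣ (Nat.choose (p ^ k) (r + 1) : ℤ) := by
      exact_mod_cast Int.natCast_dvd_natCast.mpr (dvd_choose_pp hp (by omega) hr hk)
    have h0 : (Nat.choose (p ^ k) (r + 1) : ℤ) ≡ 0 [ZMOD (p ^ (k - Nat.log p D) : ℕ)] :=
      (Int.modEq_zero_iff_dvd).mpr hdvd
    have heq : (Nat.choose (p ^ k - 1) (r + 1) : ℤ)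
        = (Nat.choose (p ^ k) (r + 1) : ℤ) - (Nat.choose (p ^ k - 1) r : ℤ) := by
      rw [hpascal]; push_cast; ring
    rw [heq]
    calc (Nat.choose (p ^ k) (r + 1) : ℤ) - (Nat.choose (p ^ k - 1) r : ℤ)
        ≡ 0 - (-1) ^ r [ZMOD (p ^ (k - Nat.log p D) : ℕ)] := Int.ModEq.sub h0 hih
      _ = (-1) ^ (r + 1) := by ring

lemma choose_shift_dvd {p : ℕ} (hp : p.Prime) {D k a₀ s : ℕ} (ha₀ : a₀ < s) (hs : s ≤ D)
    (hk : Nat.log p D < k) : (p ^ (k - Nat.log p D) : ℕ) ∣ Nat.choose (p ^ k + a₀) s := by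
  rw [Nat.add_choose_eq]
  apply Finset.dvd_sum
  intro ij hij
  rw [HasAntidiagonal.mem_antidiagonal] at hij
  rcases Nat.eq_zero_or_pos ij.1 with h | h
  · have : ij.2 = s := by omega
    rw [this, Nat.choose_eq_zero_of_lt ha₀, mul_zero]
    exact dvd_zero _
  · exact Dvd.dvd.mul_right (dvd_choose_pp hp h (by omega) hk) _

lemma modEq_sum {α : Type*} (s : Finset α) (f g : α → ℤ) (n : ℤ)
    (h : ∀ i ∈ s, f i ≡ g i [ZMOD n]) : ∑ i ∈ s, f i ≡ ∑ i ∈ s, g i [ZMOD n] := by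
  classical
  induction s using Finset.induction_on with
  | empty => simp
  | @insert x s hx ih =>
    rw [Finset.sum_insert hx, Finset.sum_insert hx]
    exact (h x (mem_insert_self _ _)).add (ih fun i hi => h i (mem_insert_of_mem hi))

section Total

open scoped Classical

variable {N d : ℕ} (v : Fin N → Fin d → ℤ)

/-- The grand total congruence. -/
lemma total_congruence {p k : ℕ} (hp : p.Prime) (hN : 0 < N) (hk : Nat.log p d < k) :
    ((∑ bj ∈ boxFinset v, (Finset.piAntidiag (Tset v bj.1 bj.2) (p ^ k - bj.2)).card : ℕ) : ℤ)
      ≡ 1 [ZMOD ((p ^ (k - Nat.log p d) : ℕ) : ℤ)] := by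
  set t := p ^ k with htdef
  set l := Nat.log p d with hldef
  have htd : d + 1 ≤ t := by
    have h1 : d < p ^ (l + 1) := Nat.lt_pow_succ_log_self hp.one_lt d
    have h2 : p ^ (l + 1) ≤ p ^ k := Nat.pow_le_pow_right hp.pos (by omega)
    omega
  have hterm : ∀ bj ∈ boxFinset v,
      (((Finset.piAntidiag (Tset v bj.1 bj.2) (t - bj.2)).card : ℕ) : ℤ)
        ≡ (if bj.2 = (Tset v bj.1 bj.2).card
            then (-1 : ℤ) ^ ((Tset v bj.1 bj.2).card - 1) else 0)
          [ZMOD ((p ^ (k - l) : ℕ) : ℤ)] := by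
    intro bj hbj
    rw [mem_boxFinset] at hbj
    obtain ⟨he1, hje, hed⟩ := isBox_facts v hbj
    have hj1 : 1 ≤ bj.2 := hbj.1
    set e := (Tset v bj.1 bj.2).card with hedef
    set j := bj.2 with hjdef
    have hjt : j ≤ t := by omega
    rw [card_piAntidiag, Nat.multichoose_eq]
    by_cases hsat : j = e
    · rw [if_pos hsat]
      have harith : e + (t - j) - 1 = t - 1 := by omega
      rw [harith]
      have hsymm : (t - 1).choose (t - j) = (t - 1).choose (e - 1) := by
        have hle : t - j ≤ t - 1 := by omega
        have := Nat.choose_symm hle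
        rw [show t - 1 - (t - j) = e - 1 by omega] at this
        exact this.symm
      rw [hsymm]
      exact choose_pred_modeq hp hk (e - 1) (by omega)
    · rw [if_neg hsat]
      have hjlt : j < e := lt_of_le_of_ne hje hsat
      have hsymm : (e + (t - j) - 1).choose (t - j) = (e + (t - j) - 1).choose (e - 1) := by
        have hle : t - j ≤ e + (t - j) - 1 := by omega
        have := Nat.choose_symm hle
        rw [show e + (t - j) - 1 - (t - j) = e - 1 by omega] at this
        exact this.symm
      rw [hsymm]
      have harith : e + (t - j) - 1 = p ^ k + (e - j - 1) := by omega
      rw [harith]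
      have hdvd := choose_shift_dvd hp (show e - j - 1 < e - 1 by omega)
          (show e - 1 ≤ d by omega) hk
      have : ((p ^ (k - l) : ℕ) : ℤ) ∣ ((p ^ k + (e - j - 1)).choose (e - 1) : ℤ) :=
        Int.natCast_dvd_natCast.mpr hdvd
      exact (Int.modEq_zero_iff_dvd).mpr this
  rw [Nat.cast_sum]
  have hstep := modEq_sum (boxFinset v)
    (fun bj => (((Finset.piAntidiag (Tset v bj.1 bj.2) (t - bj.2)).card : ℕ) : ℤ))
    (fun bj => if bj.2 = (Tset v bj.1 bj.2).card
        then (-1 : ℤ) ^ ((Tset v bj.1 bj.2).card - 1) else 0)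
    ((p ^ (k - l) : ℕ) : ℤ) hterm
  have hfilter : ∑ bj ∈ boxFinset v,
      (if bj.2 = (Tset v bj.1 bj.2).card
        then (-1 : ℤ) ^ ((Tset v bj.1 bj.2).card - 1) else 0)
      = ∑ bj ∈ (boxFinset v).filter (fun bj => bj.2 = (Tset v bj.1 bj.2).card),
          (-1 : ℤ) ^ ((Tset v bj.1 bj.2).card - 1) := (Finset.sum_filter _ _).symm
  calc (∑ bj ∈ boxFinset v,
          ((Finset.piAntidiag (Tset v bj.1 bj.2) (t - bj.2)).card : ℤ))
      ≡ ∑ bj ∈ boxFinset v,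
          (if bj.2 = (Tset v bj.1 bj.2).card
            then (-1 : ℤ) ^ ((Tset v bj.1 bj.2).card - 1) else 0)
        [ZMOD ((p ^ (k - l) : ℕ) : ℤ)] := hstep
    _ = 1 := by
        rw [hfilter, sum_saturated v hN, sum_nonempty_cells v hN]

end Total


section Glue

variable {N d : ℕ}

lemma sum_image_enum {M : Type*} [AddCommMonoid M] (V : Finset (Fin d → ℤ))
    (hV : V.Nonempty) (F : (Fin d → ℝ) → M) :
    ∑ z ∈ V.image (fun a : Fin d → ℤ => fun c => (a c : ℝ)), F z
      = ∑ i : Fin V.card, F (fun c => (((V.equivFin.symm i) : Fin d → ℤ) c : ℝ)) := by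
  classical
  set g : (Fin d → ℤ) → (Fin d → ℝ) := fun a => fun c => (a c : ℝ) with hg
  have hginj : ∀ a ∈ V, ∀ b ∈ V, g a = g b → a = b := by
    intro a _ b _ hab
    funext c
    have h2 : ((a c : ℤ) : ℝ) = ((b c : ℤ) : ℝ) := congrFun hab c
    exact_mod_cast h2
  rw [Finset.sum_image hginj]
  rw [← Finset.sum_coe_sort V (fun a => F (g a))]
  exact (Equiv.sum_comp V.equivFin.symm (fun a : ↥V => F (g ↑a))).symm

lemma set_eq_rep (V : Finset (Fin d → ℤ)) (hV : V.Nonempty) (P : Set (Fin d → ℝ))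
    (hP : P = convexHull ℝ ((fun a : Fin d → ℤ => fun c => (a c : ℝ)) '' V))
    (t : ℕ) (htpos : 0 < t) :
    {x : Fin d → ℤ | (fun c => (x c : ℝ)) ∈ ((t : ℕ) : ℝ) • P}
      = {x : Fin d → ℤ |
          ∃ μ, Rep (fun i : Fin V.card => ((V.equivFin.symm i) : Fin d → ℤ)) x t μ} := by
  classical
  set g : (Fin d → ℤ) → (Fin d → ℝ) := fun a => fun c => (a c : ℝ) with hg
  set v : Fin V.card → Fin d → ℤ := fun i => ((V.equivFin.symm i) : Fin d → ℤ) with hv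
  have htne : ((t : ℕ) : ℝ) ≠ 0 := by positivity
  have hPimg : (fun a : Fin d → ℤ => fun c => (a c : ℝ)) '' ↑V = ↑(V.image g) := by
    rw [Finset.coe_image]
  ext x
  simp only [Set.mem_setOf_eq]
  constructor
  · intro hx
    obtain ⟨y, hyP, hty⟩ := Set.mem_smul_set.mp hx
    rw [hP, hPimg] at hyP
    rw [Finset.convexHull_eq] at hyP
    obtain ⟨w, hw0, hw1, hwcm⟩ := hyP
    rw [Finset.centerMass_eq_of_sum_1 _ id hw1] at hwcm
    set μ : Fin V.card → ℝ := fun i => (t : ℝ) * w (g (v i)) with hμ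
    refine ⟨μ, ?_, ?_, ?_⟩
    · intro i
      have hmem : g (v i) ∈ V.image g := Finset.mem_image_of_mem g (V.equivFin.symm i).2
      have := hw0 _ hmem
      have ht0 : (0:ℝ) ≤ (t : ℝ) := by positivity
      exact mul_nonneg ht0 this
    · unfold ht
      have : ∑ i, μ i = (t : ℝ) * ∑ i, w (g (v i)) := by
        rw [Finset.mul_sum]
      rw [this]
      have hsum := sum_image_enum V hV w
      rw [← hsum, hw1, mul_one]
    · funext c
      unfold pt
      have hterm : ∀ i, μ i * ((v i c : ℤ) : ℝ) = (t:ℝ) * (w (g (v i)) * (g (v i)) c) := by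
        intro i
        have : (g (v i)) c = ((v i c : ℤ) : ℝ) := rfl
        rw [this, hμ]
        ring
      rw [Finset.sum_congr rfl (fun i _ => hterm i), ← Finset.mul_sum]
      have hsum := sum_image_enum V hV (fun z => w z * z c)
      rw [← hsum]
      have hyc : ∑ z ∈ V.image g, w z * z c = y c := by
        have := congrFun hwcm c
        rw [← this]
        rw [Finset.sum_apply]
        exact Finset.sum_congr rfl fun z _ => by simp
      rw [hyc]
      have := congrFun hty c
      simpa using this
  · rintro ⟨μ, hμ0, hht, hpt⟩
    rw [Set.mem_smul_set]
    refine ⟨((t : ℕ) : ℝ)⁻¹ • g x, ?_, ?_⟩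
    · rw [hP, hPimg]
      have hcm : (Finset.univ : Finset (Fin V.card)).centerMass μ (fun i => g (v i))
          ∈ convexHull ℝ (↑(V.image g) : Set (Fin d → ℝ)) := by
        apply Finset.centerMass_mem_convexHull
        · exact fun i _ => hμ0 i
        · rw [show ∑ i, μ i = ht μ from rfl, hht]
          positivity
        · intro i _
          exact Finset.mem_coe.mpr (Finset.mem_image_of_mem g (V.equivFin.symm i).2)
      have hcmval : (Finset.univ : Finset (Fin V.card)).centerMass μ (fun i => g (v i))
          = ((t : ℕ) : ℝ)⁻¹ • g x := by
        rw [Finset.centerMass]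
        rw [show ∑ i, μ i = ht μ from rfl, hht]
        congr 1
        funext c
        rw [Finset.sum_apply]
        have : ∑ i, (μ i • g (v i)) c = ∑ i, μ i * ((v i c : ℤ) : ℝ) := by
          exact Finset.sum_congr rfl fun i _ => by simp [hg]
        rw [this]
        have := congrFun hpt c
        exact this
      rw [← hcmval]
      exact hcm
    · rw [smul_inv_smul₀ htne]

end Glue

end AT


/-- **Akopyan–Tagami, Lemma (convex lemma).**
Let `P` be a convex polytope in `ℝ^d` with vertices in `ℤ^d`, `p` a prime and
`l = ⌊log_p d⌋`.  Then for any natural `k > l` the polytope `p^k • P` contains exactly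
one lattice point modulo `p^(k - l)`. -/
theorem lattice_points_in_prime_power_dilate_modeq_one
    (d : ℕ) (p : ℕ) (hp : p.Prime)
    (V : Finset (Fin d → ℤ)) (hV : V.Nonempty)
    (P : Set (Fin d → ℝ))
    (hP : P = convexHull ℝ ((fun v : Fin d → ℤ => fun i => (v i : ℝ)) '' V))
    (k : ℕ) (hk : Nat.log p d < k) :
    {x : Fin d → ℤ | (fun i => (x i : ℝ)) ∈ ((p ^ k : ℕ) : ℝ) • P}.ncard
      ≡ 1 [MOD p ^ (k - Nat.log p d)] := by
  classical
  have hN : 0 < V.card := Finset.card_pos.mpr hV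
  have htpos : 0 < p ^ k := pow_pos hp.pos k
  have htd : d + 1 ≤ p ^ k := by
    have h1 : d < p ^ (Nat.log p d + 1) := Nat.lt_pow_succ_log_self hp.one_lt d
    have h2 : p ^ (Nat.log p d + 1) ≤ p ^ k := Nat.pow_le_pow_right hp.pos (by omega)
    omega
  have hseteq := AT.set_eq_rep V hV P hP (p ^ k) htpos
  have hcount := AT.main_count (fun i : Fin V.card => ((V.equivFin.symm i) : Fin d → ℤ))
    (p ^ k) (by omega) htd
  have heq : {x : Fin d → ℤ | (fun i => (x i : ℝ)) ∈ ((p ^ k : ℕ) : ℝ) • P}.ncard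
      = ∑ bj ∈ AT.boxFinset (fun i : Fin V.card => ((V.equivFin.symm i) : Fin d → ℤ)),
          (Finset.piAntidiag
            (AT.Tset (fun i : Fin V.card => ((V.equivFin.symm i) : Fin d → ℤ)) bj.1 bj.2)
            (p ^ k - bj.2)).card := by
    rw [hseteq]
    exact hcount
  rw [heq]
  have hint := AT.total_congruence
    (fun i : Fin V.card => ((V.equivFin.symm i) : Fin d → ℤ)) hp hN hk
  exact_mod_cast (Int.natCast_modEq_iff ..).mp (by exact_mod_cast hint)
end

section
/- Let d ≥ 1 and n > 1 be natural numbers with prime factorization n = p₁^{α₁} p₂^{α₂} ⋯ p_s^{α_s}, and set t = p₁^{β₁} p₂^{β₂} ⋯ p_s^{β_s} where β_i = α_i + ⌊log_{p_i} d⌋. Then for every simplex Δ in ℝ^d with vertices in ℤ^d, the number of lattice points of ℤ^d contained in the dilated simplex t·Δ is congruent to 1 modulo n. -/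
lemma my_t_gt_d (d n t : ℕ) (hd : 1 ≤ d) (hn : 1 < n)
    (ht : t = ∏ p ∈ n.primeFactors, p ^ (n.factorization p + Nat.log p d)) :
    d < t := by
  obtain ⟨p, hp⟩ := (Nat.nonempty_primeFactors.2 hn)
  have hpp : p.Prime := Nat.prime_of_mem_primeFactors hp
  have hα : 1 ≤ n.factorization p := (Nat.Prime.factorization_pos_of_dvd hpp (by omega)
    (Nat.dvd_of_mem_primeFactors hp))
  have hdvd : p ^ (n.factorization p + Nat.log p d) ∣ t := ht ▸ Finset.dvd_prod_of_mem _ hp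
  have ht0 : 0 < t := by
    rw [ht]
    exact Finset.prod_pos fun q hq => pow_pos (Nat.prime_of_mem_primeFactors hq).pos _
  have h1 : d < p ^ (Nat.log p d + 1) := Nat.lt_pow_succ_log_self hpp.one_lt d
  have h2 : p ^ (Nat.log p d + 1) ≤ p ^ (n.factorization p + Nat.log p d) :=
    Nat.pow_le_pow_right hpp.pos (by omega)
  exact lt_of_lt_of_le (lt_of_lt_of_le h1 h2) (Nat.le_of_dvd ht0 hdvd)

lemma my_n_dvd_choose (d n t m : ℕ) (hd : 1 ≤ d) (hn : 1 < n)
    (ht : t = ∏ p ∈ n.primeFactors, p ^ (n.factorization p + Nat.log p d))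
    (hm1 : 1 ≤ m) (hmd : m ≤ d) : n ∣ t.choose m := by
  have htd : d < t := my_t_gt_d d n t hd hn ht
  have hc0 : t.choose m ≠ 0 := (Nat.choose_pos (by omega)).ne'
  rw [← Nat.factorization_le_iff_dvd (by omega) hc0]
  intro p
  by_cases hp : p ∈ n.primeFactors
  swap
  · have : n.factorization p = 0 := by
      by_cases hpp : p.Prime
      · have hpn : ¬ p ∣ n := fun hdvd => hp (Nat.mem_primeFactors.2 ⟨hpp, hdvd, by omega⟩)
        exact Nat.factorization_eq_zero_of_not_dvd hpn
      · exact Nat.factorization_eq_zero_of_not_prime _ hpp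
    simp [this]
  have hpp : p.Prime := Nat.prime_of_mem_primeFactors hp
  set α := n.factorization p with hα
  set γ := Nat.log p d with hγ
  -- key identity : t * (t-1).choose (m-1) = t.choose m * m
  have hkey : t ∣ t.choose m * m := by
    have := Nat.add_one_mul_choose_eq (t - 1) (m - 1)
    rw [(by omega : t-1+1 = t), (by omega : m-1+1 = m)] at this
    exact ⟨(t-1).choose (m-1), by omega⟩
  have hpt : p ^ (α + γ) ∣ t := ht ▸ Finset.dvd_prod_of_mem _ hp
  have hvm : m.factorization p ≤ γ := by
    have hpvm : p ^ m.factorization p ∣ m := Nat.ordProj_dvd m p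
    have : p ^ m.factorization p ≤ d := le_trans (Nat.le_of_dvd (by omega) hpvm) hmd
    exact (Nat.le_log_iff_pow_le hpp.one_lt (by omega)).2 this
  have hdvd2 : p ^ (α + γ) ∣ t.choose m * m := dvd_trans hpt hkey
  have := (Nat.Prime.pow_dvd_iff_le_factorization hpp
      (by positivity : t.choose m * m ≠ 0)).1 hdvd2
  rw [Nat.factorization_mul hc0 (by omega)] at this
  simp only [Finsupp.coe_add, Pi.add_apply] at this
  omega

lemma my_choose_mod (d n t k j : ℕ) (hd : 1 ≤ d) (hn : 1 < n)
    (ht : t = ∏ p ∈ n.primeFactors, p ^ (n.factorization p + Nat.log p d))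
    (hjk : j ≤ k) (hkd : k ≤ d) :
    (t + j).choose k ≡ (if j = k then 1 else 0) [MOD n] := by
  rw [Nat.add_choose_eq]
  rw [Finset.Nat.sum_antidiagonal_eq_sum_range_succ (fun x y => t.choose x * j.choose y)]
  rw [Finset.sum_range_succ']
  simp only [Nat.choose_zero_right, one_mul, Nat.sub_zero]
  have hsum : (∑ i ∈ Finset.range k, t.choose (i+1) * j.choose (k - (i+1))) ≡ 0 [MOD n] := by
    refine (Nat.modEq_zero_iff_dvd).2 (Finset.dvd_sum ?_)
    intro i hi
    simp only [Finset.mem_range] at hi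
    exact Dvd.dvd.mul_right (my_n_dvd_choose d n t (i+1) hd hn ht (by omega) (by omega)) _
  have hlast : j.choose k = if j = k then 1 else 0 := by
    rcases eq_or_lt_of_le hjk with h | h
    · simp [h, Nat.choose_self]
    · rw [Nat.choose_eq_zero_of_lt h, if_neg (by omega)]
  calc (∑ i ∈ Finset.range k, t.choose (i+1) * j.choose (k - (i+1))) + j.choose k
      ≡ 0 + j.choose k [MOD n] := Nat.ModEq.add_right _ hsum
    _ = (if j = k then 1 else 0) := by rw [zero_add, hlast]

open scoped Pointwise

lemma my_modEq_sum {α : Type*} (s : Finset α) (f g : α → ℕ) (n : ℕ)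
    (h : ∀ a ∈ s, f a ≡ g a [MOD n]) : ∑ a ∈ s, f a ≡ ∑ a ∈ s, g a [MOD n] := by
  induction s using Finset.cons_induction with
  | empty => rfl
  | cons a s ha ih =>
    rw [Finset.sum_cons, Finset.sum_cons]
    exact Nat.ModEq.add (h a (Finset.mem_cons_self a s))
      (ih fun b hb => h b (Finset.mem_cons_of_mem hb))

lemma my_card_piAntidiag_univ (ι : Type*) [Fintype ι] [DecidableEq ι] (m : ℕ) :
    (Finset.piAntidiag (Finset.univ : Finset ι) m).card
      = Nat.multichoose (Fintype.card ι) m := by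
  rw [← Finset.map_sym_eq_piAntidiag, Finset.card_map, Finset.sym_univ, Finset.card_univ,
    Sym.card_sym_eq_multichoose]

lemma my_card_piAntidiag_univ' (ι : Type*) [Fintype ι] [DecidableEq ι] [Nonempty ι] (m : ℕ) :
    (Finset.piAntidiag (Finset.univ : Finset ι) m).card
      = (m + (Fintype.card ι - 1)).choose (Fintype.card ι - 1) := by
  rw [my_card_piAntidiag_univ, Nat.multichoose_eq]
  have hK : 1 ≤ Fintype.card ι := Fintype.card_pos
  rw [(by omega : Fintype.card ι + m - 1 = m + (Fintype.card ι - 1))]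
  rw [← Nat.choose_symm (by omega : m ≤ m + (Fintype.card ι - 1))]
  congr 1
  omega

open scoped Pointwise

section Geom

variable (d t : ℕ) (V : Finset (Fin d → ℤ))

noncomputable local instance : DecidableEq (Fin d → ℝ) := Classical.decEq _

/-- membership characterization -/
lemma my_mem_iff (ht0 : 0 < t)
    (Δ : Set (Fin d → ℝ))
    (hΔ : Δ = convexHull ℝ ((fun v : Fin d → ℤ => fun i => (v i : ℝ)) '' V))
    (x : Fin d → ℤ) :
    ((fun i => (x i : ℝ)) ∈ (t : ℝ) • Δ) ↔
      ∃ c : {v // v ∈ V} → ℝ, (∀ i, 0 ≤ c i) ∧ (∑ i, c i = (t : ℝ)) ∧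
        (∀ j, ∑ i, c i * ((i : Fin d → ℤ) j : ℝ) = (x j : ℝ)) := by
  classical
  set g : (Fin d → ℤ) → (Fin d → ℝ) := fun v => fun i => (v i : ℝ) with hg
  have hginj : Function.Injective g := by
    intro a b hab
    funext i
    exact Int.cast_injective (congrFun hab i)
  constructor
  · intro hx
    rw [Set.mem_smul_set] at hx
    obtain ⟨y, hy, hxy⟩ := hx
    rw [hΔ, ← Finset.coe_image, Finset.convexHull_eq] at hy
    obtain ⟨w, hw0, hw1, hwc⟩ := hy
    rw [Finset.centerMass_eq_of_sum_1 _ _ hw1] at hwc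
    rw [Finset.sum_image (fun a ha b hb hab => hginj hab)] at hw1
    rw [Finset.sum_image (fun a ha b hb hab => hginj hab)] at hwc
    refine ⟨fun i => t * w (g i), fun i => mul_nonneg (by positivity)
      (hw0 _ (Finset.mem_image_of_mem _ i.2)), ?_, ?_⟩
    · rw [← Finset.mul_sum, ← Finset.sum_attach V (fun v => w (g v)), Finset.univ_eq_attach] at *
      rw [hw1, mul_one]
    · intro j
      have hyj : ∑ v ∈ V, w (g v) * g v j = y j := by
        rw [← hwc]
        simp [Finset.sum_apply]
      have hxj : (t : ℝ) * y j = (x j : ℝ) := by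
        have := congrFun hxy j
        simpa using this
      calc ∑ i : {v // v ∈ V}, (t : ℝ) * w (g i) * ((i : Fin d → ℤ) j : ℝ)
          = (t : ℝ) * ∑ i : {v // v ∈ V}, w (g i) * g i j := by
            rw [Finset.mul_sum]; congr 1; funext i; ring
        _ = (t : ℝ) * ∑ v ∈ V, w (g v) * g v j := by
            rw [Finset.univ_eq_attach, Finset.sum_attach V (fun v => w (g v) * g v j)]
        _ = (x j : ℝ) := by rw [hyj, hxj]
  · rintro ⟨c, hc0, hcsum, hcrep⟩
    rw [hΔ, Set.mem_smul_set]
    set w : {v // v ∈ V} → ℝ := fun i => c i / t with hw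
    have hw1 : ∑ i, w i = 1 := by
      rw [hw, ← Finset.sum_div, hcsum]
      field_simp
    refine ⟨Finset.univ.centerMass w (fun i => g i), ?_, ?_⟩
    · exact Finset.centerMass_mem_convexHull _ (fun i _ => div_nonneg (hc0 i) (by positivity))
        (by rw [hw1]; norm_num) (fun i _ => ⟨(i : Fin d → ℤ), i.2, rfl⟩)
    · rw [Finset.centerMass_eq_of_sum_1 _ _ hw1]
      funext j
      have htne : (t : ℝ) ≠ 0 := by positivity
      have h1 : ((t : ℝ) • ∑ i, w i • (fun i' => g i' : {v // v ∈ V} → Fin d → ℝ) i) j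
          = (t : ℝ) * ∑ i, w i * g i j := by
        simp [Finset.sum_apply, Finset.mul_sum]
      rw [h1, Finset.mul_sum]
      rw [← hcrep j]
      congr 1; funext i
      rw [hw]
      field_simp
      rw [hg]

lemma my_uniq
    (hindep : AffineIndependent ℝ (fun v : {v // v ∈ V} => fun i => ((v : Fin d → ℤ) i : ℝ)))
    (c c' : {v // v ∈ V} → ℝ) (hsum : ∑ i, c i = ∑ i, c' i)
    (hrep : ∀ j, ∑ i, c i * ((i : Fin d → ℤ) j : ℝ)
      = ∑ i, c' i * ((i : Fin d → ℤ) j : ℝ)) :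
    c = c' := by
  have hw0 : ∑ i, (c - c') i = (0 : ℝ) := by
    simp only [Pi.sub_apply, Finset.sum_sub_distrib, hsum, sub_self]
  have hv0 : Finset.univ.weightedVSub
      (fun v : {v // v ∈ V} => fun i => ((v : Fin d → ℤ) i : ℝ)) (c - c') = 0 := by
    rw [Finset.weightedVSub_eq_linear_combination _ hw0]
    funext j
    have : ∑ i : {v // v ∈ V}, (c i - c' i) * ((i : Fin d → ℤ) j : ℝ) = 0 := by
      simp only [sub_mul, Finset.sum_sub_distrib, hrep j, sub_self]
    simpa [Finset.sum_apply] using this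
  have h := (affineIndependent_iff_of_fintype
    (k := ℝ) (fun v : {v // v ∈ V} => fun i => ((v : Fin d → ℤ) i : ℝ))).1 hindep (c - c') hw0 hv0
  funext i
  have := h i
  simp only [Pi.sub_apply] at this
  linarith

end Geom
section Main

/-- Let `n > 1` have prime factorization `n = ∏ pᵢ^αᵢ` and set
`t = ∏ pᵢ^βᵢ` with `βᵢ = αᵢ + ⌊log_{pᵢ} d⌋`.  Then for every simplex `Δ` in `ℝ^d`
with vertices in `ℤ^d`, the number of lattice points in `t • Δ` is `1` modulo `n`. -/
theorem lattice_points_in_dilated_simplex_modeq_one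
    (d n : ℕ) (hd : 1 ≤ d) (hn : 1 < n)
    (t : ℕ) (ht : t = ∏ p ∈ n.primeFactors, p ^ (n.factorization p + Nat.log p d))
    (V : Finset (Fin d → ℤ)) (hV : V.Nonempty)
    (hindep : AffineIndependent ℝ (fun v : V => fun i => ((v : Fin d → ℤ) i : ℝ)))
    (Δ : Set (Fin d → ℝ))
    (hΔ : Δ = convexHull ℝ ((fun v : Fin d → ℤ => fun i => (v i : ℝ)) '' V)) :
    {x : Fin d → ℤ | (fun i => (x i : ℝ)) ∈ (t : ℝ) • Δ}.ncard ≡ 1 [MOD n] := by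
  classical
  have htd : d < t := my_t_gt_d d n t hd hn ht
  have ht0 : 0 < t := by omega
  set S : Set (Fin d → ℤ) := {x : Fin d → ℤ | (fun i => (x i : ℝ)) ∈ (t : ℝ) • Δ} with hS
  have hne : Nonempty {v // v ∈ V} := ⟨⟨hV.choose, hV.choose_spec⟩⟩
  have hK1 : 1 ≤ Fintype.card {v // v ∈ V} := Fintype.card_pos
  set k : ℕ := Fintype.card {v // v ∈ V} - 1 with hk
  have hkd : k ≤ d := by
    have h1 := hindep.card_le_finrank_succ
    have h2 : Module.finrank ℝ (vectorSpan ℝ (Set.range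
        (fun v : {v // v ∈ V} => fun i => ((v : Fin d → ℤ) i : ℝ))))
        ≤ Module.finrank ℝ (Fin d → ℝ) := Submodule.finrank_le _
    have h3 : Module.finrank ℝ (Fin d → ℝ) = d := by simp [Module.finrank_pi]
    omega
  -- choice of barycentric coordinates
  have hex : ∀ x : Fin d → ℤ, ∃ c : {v // v ∈ V} → ℝ, x ∈ S →
      ((∀ i, 0 ≤ c i) ∧ (∑ i, c i = (t:ℝ)) ∧
        (∀ j, ∑ i, c i * ((i : Fin d → ℤ) j : ℝ) = (x j : ℝ))) := by
    intro x
    by_cases hx : x ∈ S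
    · obtain ⟨c, hc⟩ := (my_mem_iff d t V ht0 Δ hΔ x).1 hx
      exact ⟨c, fun _ => hc⟩
    · exact ⟨0, fun h => absurd h hx⟩
  choose C hC using hex
  set A : (Fin d → ℤ) → {v // v ∈ V} → ℕ := fun x i => (⌊C x i⌋).toNat with hA
  set F : (Fin d → ℤ) → {v // v ∈ V} → ℝ := fun x i => C x i - (A x i : ℝ) with hF
  have hCAF : ∀ x i, C x i = F x i + (A x i : ℝ) := by
    intro x i; rw [hF]; ring
  have hfacts : ∀ x ∈ S, ∀ i, ((A x i : ℝ) ≤ C x i ∧ C x i < (A x i : ℝ) + 1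
      ∧ 0 ≤ F x i ∧ F x i < 1) := by
    intro x hx i
    have h0 := (hC x hx).1 i
    have hfl : ((A x i : ℕ) : ℝ) = ((⌊C x i⌋ : ℤ) : ℝ) := by
      rw [hA]
      norm_cast
      exact Int.toNat_of_nonneg (Int.floor_nonneg.2 h0)
    have h1 : ((A x i : ℕ) : ℝ) ≤ C x i := by rw [hfl]; exact Int.floor_le _
    have h2 : C x i < ((A x i : ℕ) : ℝ) + 1 := by rw [hfl]; exact Int.lt_floor_add_one _
    exact ⟨h1, h2, by simp only [hF]; linarith, by simp only [hF]; linarith⟩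
  have hsumA : ∀ x ∈ S, (∑ i, (A x i : ℝ)) + (∑ i, F x i) = (t : ℝ) := by
    intro x hx
    have h := (hC x hx).2.1
    rw [hF, Finset.sum_sub_distrib]
    linarith
  -- finiteness
  have hSfin : S.Finite := by
    set B : ℝ := ∑ v ∈ V, ∑ j', |((v j' : ℤ) : ℝ)| with hB
    have hbound : ∀ i : {v // v ∈ V}, ∀ j, |(((i : Fin d → ℤ)) j : ℝ)| ≤ B := by
      intro i j
      calc |((i : Fin d → ℤ) j : ℝ)| ≤ ∑ j', |((i : Fin d → ℤ) j' : ℝ)| :=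
            Finset.single_le_sum (f := fun j' => |((i : Fin d → ℤ) j' : ℝ)|)
              (fun j' _ => abs_nonneg _) (Finset.mem_univ j)
        _ ≤ B := Finset.single_le_sum (f := fun v => ∑ j', |((v j' : ℤ) : ℝ)|)
            (fun v _ => Finset.sum_nonneg fun _ _ => abs_nonneg _) i.2
    set Mz : ℤ := (t : ℤ) * (∑ v ∈ V, ∑ j', |v j'|) with hMz
    have hMzR : ((Mz : ℤ) : ℝ) = (t : ℝ) * B := by
      rw [hMz, hB]
      push_cast
      rfl
    apply Set.Finite.subset (Set.Finite.pi (fun j : Fin d => Set.finite_Icc (-Mz) Mz))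
    intro x hx
    obtain ⟨hc0, hcsum, hcrep⟩ := hC x hx
    simp only [Set.mem_pi, Set.mem_univ, Set.mem_Icc, forall_true_left]
    intro j
    have hb : |(x j : ℝ)| ≤ (t : ℝ) * B := by
      rw [← hcrep j]
      calc |∑ i, C x i * ((i : Fin d → ℤ) j : ℝ)|
          ≤ ∑ i, |C x i * ((i : Fin d → ℤ) j : ℝ)| := Finset.abs_sum_le_sum_abs _ _
        _ ≤ ∑ i, C x i * B := Finset.sum_le_sum (fun i _ => by
            rw [abs_mul, abs_of_nonneg (hc0 i)]
            exact mul_le_mul_of_nonneg_left (hbound i j) (hc0 i))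
        _ = (t : ℝ) * B := by rw [← Finset.sum_mul, hcsum]
    have h1 : |(x j : ℝ)| ≤ ((Mz : ℤ) : ℝ) := by rw [hMzR]; exact hb
    rw [← Int.cast_abs] at h1
    have h2 : |x j| ≤ Mz := by exact_mod_cast h1
    exact ⟨neg_le_of_abs_le h2, le_of_abs_le h2⟩
  set Fs : Finset (Fin d → ℤ) := hSfin.toFinset with hFs
  have hmemFs : ∀ x, x ∈ Fs ↔ x ∈ S := fun x => Set.Finite.mem_toFinset _
  set hgt : ({v // v ∈ V} → ℝ) → ℕ := fun f => (⌊∑ i, f i⌋).toNat with hhgt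
  set Wimg : Finset ({v // v ∈ V} → ℝ) := Fs.image F with hWimg
  have hcard1 : Fs.card = ∑ f ∈ Wimg, (Fs.filter (fun x => F x = f)).card :=
    Finset.card_eq_sum_card_fiberwise (fun x hx => Finset.mem_image_of_mem _ hx)
  -- fiber analysis
  have hfiber : ∀ f ∈ Wimg, (hgt f ≤ k) ∧ (∑ i, f i = ((hgt f : ℕ) : ℝ)) ∧ (∀ i, 0 ≤ f i) ∧
      (Fs.filter (fun x => F x = f)).card = ((t - hgt f) + k).choose k := by
    intro f hf
    obtain ⟨x₀, hx₀, hfx₀⟩ := Finset.mem_image.1 hf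
    have hx₀S : x₀ ∈ S := (hmemFs x₀).1 hx₀
    obtain ⟨hc0, hcsum, hcrep⟩ := hC x₀ hx₀S
    subst hfx₀
    set aN : ℕ := ∑ i, A x₀ i with haN
    have hsumAr : ((aN : ℕ) : ℝ) = ∑ i, (A x₀ i : ℝ) := by
      rw [haN]; push_cast; rfl
    have hFsum : ∑ i, F x₀ i = (t : ℝ) - (aN : ℝ) := by
      have h := hsumA x₀ hx₀S
      rw [← hsumAr] at h
      linarith
    have hF0 : ∀ i, 0 ≤ F x₀ i := fun i => (hfacts x₀ hx₀S i).2.2.1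
    have haNt : aN ≤ t := by
      have h1 : (0 : ℝ) ≤ ∑ i, F x₀ i := Finset.sum_nonneg fun i _ => hF0 i
      have h2 : (aN : ℝ) ≤ (t : ℝ) := by linarith
      exact_mod_cast h2
    have hsubr : (((t - aN : ℕ)) : ℝ) = (t : ℝ) - (aN : ℝ) := by
      push_cast [Nat.cast_sub haNt]; ring
    have hFlt : ∑ i, F x₀ i < (Fintype.card {v // v ∈ V} : ℝ) := by
      have h := Finset.sum_lt_sum_of_nonempty (Finset.univ_nonempty)
        (fun i (_ : i ∈ (Finset.univ : Finset {v // v ∈ V})) => (hfacts x₀ hx₀S i).2.2.2)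
      simpa [Finset.card_univ] using h
    have hgt_eq : hgt (F x₀) = t - aN := by
      simp only [hhgt]
      rw [hFsum, ← hsubr, Int.floor_natCast, Int.toNat_natCast]
    have hgtk : hgt (F x₀) ≤ k := by
      rw [hgt_eq]
      have h1 : (((t - aN : ℕ)) : ℝ) < (Fintype.card {v // v ∈ V} : ℝ) := by
        rw [hsubr, ← hFsum]; exact hFlt
      have h2 : t - aN < Fintype.card {v // v ∈ V} := by exact_mod_cast h1
      omega
    refine ⟨hgtk, by rw [hFsum, hgt_eq, hsubr], hF0, ?_⟩
    -- the inverse map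
    set X : ({v // v ∈ V} → ℕ) → (Fin d → ℤ) :=
      fun a jj => x₀ jj + ∑ i, ((a i : ℤ) - (A x₀ i : ℤ)) * ((i : Fin d → ℤ) jj) with hX
    have hx₀r : ∀ jj, (x₀ jj : ℝ)
        = ∑ i, (F x₀ i + (A x₀ i : ℝ)) * ((i : Fin d → ℤ) jj : ℝ) := by
      intro jj
      rw [← hcrep jj]
      exact Finset.sum_congr rfl fun i _ => by rw [← hCAF]
    have hXr : ∀ a : {v // v ∈ V} → ℕ, ∀ jj, ((X a jj : ℤ) : ℝ)
        = ∑ i, (F x₀ i + (a i : ℝ)) * ((i : Fin d → ℤ) jj : ℝ) := by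
      intro a jj
      simp only [hX]
      push_cast
      rw [hx₀r jj, ← Finset.sum_add_distrib]
      exact Finset.sum_congr rfl fun i _ => by ring
    have hXS : ∀ a : {v // v ∈ V} → ℕ, (∑ i, a i = aN) →
        (X a ∈ S ∧ C (X a) = fun i => F x₀ i + (a i : ℝ)) := by
      intro a hasum
      have hrep : ∀ jj, ∑ i, (F x₀ i + (a i : ℝ)) * ((i : Fin d → ℤ) jj : ℝ)
          = ((X a jj : ℤ) : ℝ) := fun jj => (hXr a jj).symm
      have hsum' : ∑ i, (F x₀ i + (a i : ℝ)) = (t : ℝ) := by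
        rw [Finset.sum_add_distrib, hFsum]
        have h1 : ∑ i, ((a i : ℕ) : ℝ) = ((aN : ℕ) : ℝ) := by
          rw [← hasum]; push_cast; rfl
        rw [h1]; ring
      have hnn : ∀ i, 0 ≤ F x₀ i + (a i : ℝ) := fun i =>
        add_nonneg (hF0 i) (Nat.cast_nonneg _)
      have hmem : X a ∈ S := by
        rw [hS, Set.mem_setOf_eq]
        exact (my_mem_iff d t V ht0 Δ hΔ (X a)).2 ⟨_, hnn, hsum', hrep⟩
      refine ⟨hmem, my_uniq d V hindep _ _ ?_ ?_⟩
      · rw [(hC _ hmem).2.1, hsum']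
      · intro j; rw [(hC _ hmem).2.2 j, hrep j]
    have hAX : ∀ a : {v // v ∈ V} → ℕ, (∑ i, a i = aN) →
        (A (X a) = a ∧ F (X a) = F x₀) := by
      intro a hasum
      obtain ⟨hmem, hCx⟩ := hXS a hasum
      have hAa : A (X a) = a := by
        funext i
        simp only [hA, hCx]
        have hfl : ⌊F x₀ i + (a i : ℝ)⌋ = (a i : ℤ) := by
          rw [(by push_cast; ring : F x₀ i + (a i : ℝ) = F x₀ i + ((a i : ℤ) : ℝ)),
            Int.floor_add_intCast]
          have h0 : ⌊F x₀ i⌋ = 0 := Int.floor_eq_zero_iff.2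
            ⟨hF0 i, (hfacts x₀ hx₀S i).2.2.2⟩
          rw [h0, zero_add]
        rw [hfl, Int.toNat_natCast]
      refine ⟨hAa, ?_⟩
      funext i
      simp only [hF, hAa, hCx]
      ring
    have hsumAx : ∀ x ∈ Fs.filter (fun x => F x = F x₀), ∑ i, A x i = aN := by
      intro x hx
      have hxS : x ∈ S := (hmemFs x).1 (Finset.mem_of_mem_filter x hx)
      have hfx : F x = F x₀ := (Finset.mem_filter.1 hx).2
      have h1 := hsumA x hxS
      rw [hfx, hFsum] at h1
      have h2 : ((∑ i, A x i : ℕ) : ℝ) = ((aN : ℕ) : ℝ) := by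
        push_cast
        push_cast at h1
        linarith
      exact_mod_cast h2
    have hcardfib : (Fs.filter (fun x => F x = F x₀)).card
        = (Finset.piAntidiag (Finset.univ : Finset {v // v ∈ V}) aN).card := by
      apply Finset.card_bij' (fun x _ => A x) (fun a _ => X a)
      · intro x hx
        rw [Finset.mem_piAntidiag]
        exact ⟨hsumAx x hx, fun i _ => Finset.mem_univ i⟩
      · intro a ha
        rw [Finset.mem_piAntidiag] at ha
        obtain ⟨hmem, _⟩ := hXS a ha.1
        rw [Finset.mem_filter]
        exact ⟨(hmemFs _).2 hmem, (hAX a ha.1).2⟩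
      · intro x hx
        have hxS : x ∈ S := (hmemFs x).1 (Finset.mem_of_mem_filter x hx)
        have hfx : F x = F x₀ := (Finset.mem_filter.1 hx).2
        funext jj
        have h1 : ((X (A x) jj : ℤ) : ℝ) = ((x jj : ℤ) : ℝ) := by
          rw [hXr (A x) jj, ← (hC x hxS).2.2 jj]
          refine Finset.sum_congr rfl fun i _ => ?_
          rw [hCAF x i, hfx]
        exact_mod_cast h1
      · intro a ha
        rw [Finset.mem_piAntidiag] at ha
        exact (hAX a ha.1).1
    rw [hcardfib, my_card_piAntidiag_univ', hgt_eq, ← hk,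
      (by omega : t - (t - aN) = aN)]
  -- zero fiber
  have h0W : (0 : {v // v ∈ V} → ℝ) ∈ Wimg := by
    obtain ⟨v₀, hv₀⟩ := hV
    set i₀ : {v // v ∈ V} := ⟨v₀, hv₀⟩ with hi₀
    set x₀ : Fin d → ℤ := fun jj => t * v₀ jj with hx₀
    set c : {v // v ∈ V} → ℝ := fun i => if i = i₀ then (t : ℝ) else 0 with hc
    have hcsum : ∑ i, c i = (t : ℝ) := by
      rw [hc]
      rw [Finset.sum_ite_eq' Finset.univ i₀ (fun _ => (t : ℝ))]
      simp
    have hcrep : ∀ jj, ∑ i, c i * ((i : Fin d → ℤ) jj : ℝ) = (x₀ jj : ℝ) := by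
      intro jj
      have h1 : ∀ i : {v // v ∈ V}, c i * ((i : Fin d → ℤ) jj : ℝ)
          = if i = i₀ then (t : ℝ) * ((i : Fin d → ℤ) jj : ℝ) else 0 := by
        intro i
        rw [hc]
        by_cases h : i = i₀ <;> simp [h]
      rw [Finset.sum_congr rfl (fun i _ => h1 i),
        Finset.sum_ite_eq' Finset.univ i₀ (fun i => (t : ℝ) * ((i : Fin d → ℤ) jj : ℝ))]
      simp only [Finset.mem_univ, if_pos]
      simp only [hx₀, hi₀]
      push_cast
      ring
    have hcnn : ∀ i, 0 ≤ c i := by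
      intro i
      rw [hc]
      by_cases h : i = i₀ <;> simp [h]
    have hmem : x₀ ∈ S := by
      rw [hS, Set.mem_setOf_eq]
      exact (my_mem_iff d t V ht0 Δ hΔ x₀).2 ⟨c, hcnn, hcsum, hcrep⟩
    have hCx : C x₀ = c := my_uniq d V hindep _ _
      (by rw [(hC _ hmem).2.1, hcsum]) (fun j => by rw [(hC _ hmem).2.2 j, hcrep j])
    have hFx : F x₀ = 0 := by
      funext i
      simp only [hF, hA, hCx, Pi.zero_apply]
      rw [hc]
      by_cases h : i = i₀ <;> simp [h]
    exact Finset.mem_image.2 ⟨x₀, (hmemFs _).2 hmem, hFx⟩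
  have hgt0 : hgt 0 = 0 := by
    rw [hhgt]; simp
  have hgt_eq_zero : ∀ f ∈ Wimg, hgt f = 0 → f = 0 := by
    intro f hf h0
    have h := hfiber f hf
    have hsum0 : ∑ i, f i = 0 := by rw [h.2.1, h0]; simp
    funext i
    have := (Finset.sum_eq_zero_iff_of_nonneg (fun i _ => h.2.2.1 i)).1 hsum0 i (Finset.mem_univ i)
    simpa using this
  -- assemble
  have hSncard : S.ncard = Fs.card := Set.ncard_eq_toFinset_card S hSfin
  rw [hSncard, hcard1]
  have hre : ∑ f ∈ Wimg, (Fs.filter (fun x => F x = f)).card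
      = ∑ f ∈ Wimg, ((t - hgt f) + k).choose k :=
    Finset.sum_congr rfl fun f hf => (hfiber f hf).2.2.2
  rw [hre]
  have hmod : ∑ f ∈ Wimg, ((t - hgt f) + k).choose k
      ≡ ∑ f ∈ Wimg, (if f = 0 then 1 else 0) [MOD n] := by
    apply my_modEq_sum
    intro f hf
    by_cases hf0 : f = 0
    · subst hf0
      rw [hgt0, if_pos rfl, Nat.sub_zero]
      have := my_choose_mod d n t k k hd hn ht le_rfl hkd
      simpa using this
    · have h1 : 1 ≤ hgt f := by
        rcases Nat.eq_zero_or_pos (hgt f) with h | h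
        · exact absurd (hgt_eq_zero f hf h) hf0
        · exact h
      have h2 : hgt f ≤ k := (hfiber f hf).1
      have heq : (t - hgt f) + k = t + (k - hgt f) := by omega
      rw [heq, if_neg hf0]
      have := my_choose_mod d n t k (k - hgt f) hd hn ht (by omega) hkd
      rw [if_neg (by omega : ¬ (k - hgt f = k))] at this
      exact this
  refine hmod.trans ?_
  rw [Finset.sum_ite_eq' Wimg 0 (fun _ => 1), if_pos h0W]

end Main
end

section
/- Let p be a prime, d ≥ 1, l = ⌊log_p d⌋, and k > l a natural number. Then the binomial coefficient C(p^k + d, d) is congruent to 1 modulo p^(k−l). -/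
open Finset Nat

private lemma prod_choose_aux (n : ℕ) : ∀ d : ℕ,
    d ! * (n + d).choose d = ∏ i ∈ range d, (n + (i + 1))
  | 0 => by simp
  | d + 1 => by
    rw [Finset.prod_range_succ, ← prod_choose_aux n d, Nat.factorial_succ]
    have h := Nat.add_one_mul_choose_eq (n + d) d
    calc (d + 1) * d ! * (n + (d + 1)).choose (d + 1)
        = d ! * ((n + d + 1).choose (d + 1) * (d + 1)) := by ring_nf
      _ = d ! * ((n + d + 1) * (n + d).choose d) := by rw [← h]
      _ = d ! * (n + d).choose d * (n + (d + 1)) := by ring_nf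

/-- Let `p` be prime, `d ≥ 1`, `l = ⌊log_p d⌋` and `k > l`.  Then
`C(p^k + d, d) ≡ 1 (mod p^(k - l))`. -/
theorem choose_prime_pow_add_modeq_one
    (p d : ℕ) (hp : p.Prime) (hd : 1 ≤ d)
    (k : ℕ) (hk : Nat.log p d < k) :
    (p ^ k + d).choose d ≡ 1 [MOD p ^ (k - Nat.log p d)] := by
  set l := Nat.log p d with hl
  set m := k - l with hm
  have hm1 : 1 ≤ m := by omega
  have hkml : m + l ≤ k := by omega
  set C := (p ^ k + d).choose d with hC
  have hC1 : 1 ≤ C := Nat.choose_pos (Nat.le_add_left d _)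
  set v := (d !).factorization p with hv
  have hdfac : d ! ≠ 0 := Nat.factorial_ne_zero d
  -- key divisibility
  have key : p ^ (m + v) ∣ d ! * C - d ! := by
    have hprod : d ! * C = ∏ i ∈ range d, (p ^ k + (i + 1)) := prod_choose_aux (p ^ k) d
    rw [Finset.prod_add] at hprod
    have hmem : (∅ : Finset ℕ) ∈ (range d).powerset := Finset.empty_mem_powerset _
    rw [← Finset.add_sum_erase _ _ hmem] at hprod
    simp only [Finset.prod_empty, Finset.sdiff_empty, one_mul,
      Finset.prod_range_add_one_eq_factorial] at hprod
    have heq : d ! * C - d ! =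
        ∑ t ∈ ((range d).powerset.erase ∅), (∏ i ∈ t, p ^ k) * ∏ i ∈ range d \ t, (i + 1) := by
      omega
    rw [heq]
    refine Finset.dvd_sum fun t ht => ?_
    rw [Finset.mem_erase, Finset.mem_powerset] at ht
    obtain ⟨htne, hts⟩ := ht
    set s := t.card with hs
    have hs1 : 1 ≤ s := Finset.card_pos.mpr (Finset.nonempty_iff_ne_empty.mpr htne)
    -- bound the p-adic valuation of the inside product
    set B := ∏ i ∈ t, (i + 1) with hB
    set A := ∏ i ∈ range d \ t, (i + 1) with hA
    have hBne : B ≠ 0 := Finset.prod_ne_zero_iff.mpr fun i _ => Nat.succ_ne_zero i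
    have hAne : A ≠ 0 := Finset.prod_ne_zero_iff.mpr fun i _ => Nat.succ_ne_zero i
    have hAB : A * B = d ! := by
      rw [hA, hB, Finset.prod_sdiff hts, Finset.prod_range_add_one_eq_factorial]
    have hvAB : v = A.factorization p + B.factorization p := by
      rw [hv, ← hAB, Nat.factorization_mul hAne hBne]; rfl
    have hvB : B.factorization p ≤ s * l := by
      rw [hB, Nat.factorization_prod fun i _ => Nat.succ_ne_zero i]
      have : ∀ i ∈ t, (i + 1).factorization p ≤ l := by
        intro i hi
        have hid : i + 1 ≤ d := Nat.succ_le_of_lt (Finset.mem_range.mp (hts hi))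
        have h1 : p ^ ((i + 1).factorization p) ≤ d :=
          le_trans (Nat.ordProj_le p (Nat.succ_ne_zero i)) hid
        rw [hl]
        exact (Nat.le_log_iff_pow_le hp.one_lt (by omega)).mpr h1
      calc (∑ i ∈ t, (i + 1).factorization) p
          = ∑ i ∈ t, (i + 1).factorization p := by
            rw [Finsupp.finset_sum_apply]
        _ ≤ ∑ i ∈ t, l := Finset.sum_le_sum this
        _ = s * l := by rw [Finset.sum_const, smul_eq_mul]
    -- now the divisibility of this term
    rw [Finset.prod_const, ← pow_mul, ← hs]
    have hne : p ^ (k * s) * A ≠ 0 :=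
      Nat.mul_ne_zero (pow_ne_zero _ hp.pos.ne') hAne
    rw [hp.pow_dvd_iff_le_factorization hne,
      Nat.factorization_mul (pow_ne_zero _ hp.pos.ne') hAne,
      Nat.Prime.factorization_pow hp]
    simp only [Finsupp.coe_add, Pi.add_apply, Finsupp.single_eq_same]
    have : m + s * l ≤ k * s := by nlinarith
    omega
  -- deduce the result
  obtain ⟨c, hc⟩ : ∃ c, C = c + 1 := ⟨C - 1, by omega⟩
  have hsplit : d ! * (C - 1) = p ^ v * (ordCompl[p] (d !) * (C - 1)) := by
    rw [← mul_assoc, Nat.ordProj_mul_ordCompl_eq_self]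
  have key2 : p ^ (m + v) ∣ d ! * (C - 1) := by
    have : d ! * C - d ! = d ! * (C - 1) := by
      rw [hc]; simp [Nat.mul_add]
    rwa [this] at key
  rw [hsplit, pow_add, mul_comm (p ^ m)] at key2
  have key3 : p ^ m ∣ ordCompl[p] (d !) * (C - 1) :=
    (mul_dvd_mul_iff_left (pow_ne_zero v hp.pos.ne')).mp key2
  have hcop : Nat.Coprime (p ^ m) (ordCompl[p] (d !)) :=
    Nat.Coprime.pow_left m (Nat.coprime_ordCompl hp hdfac)
  have key4 : p ^ m ∣ C - 1 := hcop.dvd_of_dvd_mul_left key3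
  exact ((Nat.modEq_iff_dvd' hC1).mpr key4).symm
end

section
/- Let p be a prime, d ≥ 1, l = ⌊log_p d⌋, and k > l a natural number. Then for every integer i with 1 ≤ i ≤ d, the binomial coefficient C(p^k + d − i, d) is congruent to 0 modulo p^(k−l). -/
/-- Let `p` be prime, `d ≥ 1`, `l = ⌊log_p d⌋` and `k > l`.  Then for every `1 ≤ i ≤ d`,
`C(p^k + d - i, d) ≡ 0 (mod p^(k - Nat.log p d))`. -/
theorem choose_prime_pow_add_sub_modeq_zero
    (p d : ℕ) (hp : p.Prime) (hd : 1 ≤ d)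
    (k : ℕ) (hk : Nat.log p d < k)
    (i : ℕ) (hi1 : 1 ≤ i) (hid : i ≤ d) :
    (p ^ k + d - i).choose d ≡ 0 [MOD p ^ (k - Nat.log p d)] := by
  have hfact : Fact p.Prime := ⟨hp⟩
  set l := Nat.log p d with hl
  set n := p ^ k + d - i with hn
  have hdlt : d < p ^ (l + 1) := Nat.lt_pow_succ_log_self hp.one_lt d
  have hik : i ≤ p ^ k := hid.trans (hdlt.le.trans (Nat.pow_le_pow_right hp.pos hk))
  have hdn : d ≤ n := by
    have : i ≤ p ^ k := hik
    omega
  have hnk1 : n < p ^ (k + 1) := by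
    have h1 : p ^ (l + 1) ≤ p ^ k := Nat.pow_le_pow_right hp.pos hk
    have h2 : p ^ k + p ^ k ≤ p ^ (k + 1) := by
      rw [pow_succ]
      nlinarith [hp.two_le, pow_pos hp.pos k]
    omega
  have hlog : Nat.log p n < k + 1 := Nat.log_lt_of_lt_pow (by omega) hnk1
  have hval := padicValNat_choose (p := p) (n := n) (k := d) (b := k + 1) hdn hlog
  -- the carry set contains Icc (l+1) k
  have hsub : Finset.Icc (l + 1) k ⊆
      (Finset.Ico 1 (k + 1)).filter fun j => p ^ j ≤ d % p ^ j + (n - d) % p ^ j := by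
    intro j hj
    simp only [Finset.mem_Icc] at hj
    simp only [Finset.mem_filter, Finset.mem_Ico]
    refine ⟨⟨by omega, by omega⟩, ?_⟩
    have hpj : p ^ (l + 1) ≤ p ^ j := Nat.pow_le_pow_right hp.pos hj.1
    have hdj : d < p ^ j := lt_of_lt_of_le hdlt hpj
    have hjk : p ^ j ≤ p ^ k := Nat.pow_le_pow_right hp.pos hj.2
    have hnd : n - d = p ^ k - i := by omega
    have hipj : i ≤ p ^ j := le_of_lt (lt_of_le_of_lt hid hdj)
    have hmod : (p ^ k - i) % p ^ j = p ^ j - i := by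
      have hsplit : p ^ k - i = (p ^ k - p ^ j) + (p ^ j - i) := by omega
      have hdvd : p ^ j ∣ p ^ k - p ^ j := by
        exact Nat.dvd_sub (pow_dvd_pow p hj.2) dvd_rfl
      have h0 : (p ^ k - p ^ j) % p ^ j = 0 := Nat.mod_eq_zero_of_dvd hdvd
      rw [hsplit, Nat.add_mod, h0, Nat.zero_add, Nat.mod_mod_of_dvd _ dvd_rfl,
        Nat.mod_eq_of_lt (by omega)]
    rw [hnd, hmod, Nat.mod_eq_of_lt hdj]
    omega
  have hcard : k - l ≤ padicValNat p (n.choose d) := by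
    rw [hval]
    calc k - l = (Finset.Icc (l + 1) k).card := by rw [Nat.card_Icc]; omega
    _ ≤ _ := Finset.card_le_card hsub
  have hdvd : p ^ (k - l) ∣ n.choose d :=
    dvd_trans (pow_dvd_pow p hcard) pow_padicValNat_dvd
  simpa [Nat.modEq_zero_iff_dvd] using hdvd
end
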